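/- Let τ be a Borel probability measure on [0,∞], let t ∈ ℝ∖{0}, let d ∈ ℕ, and define f : (ℝ≥0)^d ∖ {0} → ℝ by f(x) = ‖x‖₁ · exp₂( t·∫_{[0,∞]} H_α(x/‖x‖₁) dτ(α) ), where ‖x‖₁ = ∑_i x_i. Then: (1) f is concave whenever t > 0, supp(τ) ⊆ [0,1], τ({1}) = 0, and ∫_{[0,1)} α/(1−α) dτ(α) ≤ 1/t; (2) f is convex whenever t < 0 and either (a) supp(τ) ⊆ [0,1], or (b) there exists α* ∈ (1,∞] with supp(τ) ⊆ [0,1] ∪ {α*}, τ({1}) = 0, and ∫_{[0,∞]} α/(1−α) dτ(α) ≤ 1/t, with the convention that α/(1−α) = −1 at α = ∞. -/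

import Mathlib

open MeasureTheory
open scoped ENNReal

noncomputable section

/-- Base-2 logarithm. -/
def log2 (x : ℝ) : ℝ := Real.logb 2 x

/-- Base-2 exponential. -/
def exp2 (x : ℝ) : ℝ := (2 : ℝ) ^ x

/-- Rényi entropy of order `α ∈ [0,∞]` of a vector `p` on a finite set. -/
def renyi {X : Type*} [Fintype X] (α : ℝ≥0∞) (p : X → ℝ) : ℝ :=
  if α = 0 then log2 (Nat.card {x : X // 0 < p x})
  else if α = 1 then -∑ x, p x * log2 (p x)
  else if α = ⊤ then -log2 (⨆ x, p x)
  else (1 - α.toReal)⁻¹ * log2 (∑ x, p x ^ α.toReal)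

/-- A probability vector on a finite set. -/
def IsProbVec {X : Type*} [Fintype X] (p : X → ℝ) : Prop :=
  (∀ x, 0 ≤ p x) ∧ ∑ x, p x = 1

/-- A doubly stochastic matrix. -/
def DoublyStochastic {X : Type*} [Fintype X] (S : Matrix X X ℝ) : Prop :=
  (∀ i j, 0 ≤ S i j) ∧ (∀ i, ∑ j, S i j = 1) ∧ (∀ j, ∑ i, S i j = 1)

/-- `Q` is obtained from `P` by a conditionally mixing channel. -/
def CondMixed {X Y Y' : Type*} [Fintype X] [Fintype Y] [Fintype Y']
    (P : Matrix X Y ℝ) (Q : Matrix X Y' ℝ) : Prop :=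
  ∃ (k : ℕ) (S : Fin k → Matrix X X ℝ) (D : Fin k → Matrix Y Y' ℝ),
    (∀ i, DoublyStochastic (S i)) ∧
    (∀ i a b, 0 ≤ D i a b) ∧
    (∀ a, ∑ b, ∑ i, D i a b = 1) ∧
    Q = ∑ i, S i * P * D i

/-- A joint probability distribution on finite alphabets, viewed as a matrix. -/
def IsJointProb {X Y : Type*} [Fintype X] [Fintype Y] (P : Matrix X Y ℝ) : Prop :=
  (∀ x y, 0 ≤ P x y) ∧ ∑ x, ∑ y, P x y = 1

/-- Marginal on the conditioning system: the `y`-th column sum. -/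
def margY {X Y : Type*} [Fintype X] (P : Matrix X Y ℝ) (y : Y) : ℝ := ∑ x, P x y

/-- The conditioned distribution (normalized `y`-th column). -/
def condX {X Y : Type*} [Fintype X] (P : Matrix X Y ℝ) (y : Y) : X → ℝ :=
  fun x => P x y / margY P y

/-- The conditional entropy `H_{t,τ}`. -/
def Hbulk {X Y : Type*} [Fintype X] [Fintype Y] (t : ℝ) (τ : Measure ℝ≥0∞)
    (P : Matrix X Y ℝ) : ℝ :=
  t⁻¹ * log2 (∑ y ∈ Finset.univ.filter (fun y => 0 < margY P y),
    margY P y * exp2 (t * ∫ α, renyi α (condX P y) ∂τ))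

/-- The conditional entropy `H_{0,α}`. -/
def HzeroA {X Y : Type*} [Fintype X] [Fintype Y] (α : ℝ≥0∞) (P : Matrix X Y ℝ) : ℝ :=
  ∑ y ∈ Finset.univ.filter (fun y => 0 < margY P y), margY P y * renyi α (condX P y)

/-- The conditional entropy `H_{-∞,τ}`. -/
def HnegInf {X Y : Type*} [Fintype X] [Fintype Y] (τ : Measure ℝ≥0∞)
    (P : Matrix X Y ℝ) : ℝ :=
  sInf ((fun y => ∫ α, renyi α (condX P y) ∂τ) '' {y | 0 < margY P y})

/-- The conditional entropy `H_{+∞,0}`. -/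
def HposInf {X Y : Type*} [Fintype X] [Fintype Y] (P : Matrix X Y ℝ) : ℝ :=
  sSup ((fun y => renyi 0 (condX P y)) '' {y | 0 < margY P y})

/-- The parameter set `𝒟_bulk`. -/
def Dbulk : Set (ℝ × Measure ℝ≥0∞) :=
  {p | p.1 ≠ 0 ∧ IsProbabilityMeasure p.2 ∧
    ∀ (d n n' : ℕ) (P : Matrix (Fin d) (Fin n) ℝ) (Q : Matrix (Fin d) (Fin n') ℝ),
      IsJointProb P → CondMixed P Q → Hbulk p.1 p.2 P ≤ Hbulk p.1 p.2 Q}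

/-- The parameter set `𝒟_{-∞}`. -/
def DnegInf : Set (Measure ℝ≥0∞) :=
  {τ | IsProbabilityMeasure τ ∧
    ∀ (d n n' : ℕ) (P : Matrix (Fin d) (Fin n) ℝ) (Q : Matrix (Fin d) (Fin n') ℝ),
      IsJointProb P → CondMixed P Q → HnegInf τ P ≤ HnegInf τ Q}

/-- `P'` is obtained from `P` by relabeling (injections) and embedding, with zeros elsewhere. -/
def Embeds {X Y X' Y' : Type*} [Fintype X] [Fintype Y] [Fintype X'] [Fintype Y']
    (P : Matrix X Y ℝ) (P' : Matrix X' Y' ℝ) : Prop :=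
  ∃ (f : X ↪ X') (g : Y ↪ Y'),
    (∀ x y, P' (f x) (g y) = P x y) ∧
    (∀ x' y', P' x' y' ≠ 0 → (∃ x, f x = x') ∧ (∃ y, g y = y'))

/-- Conditional majorization: after a common embedding, a conditionally mixing channel maps
(the embedding of) `P` to (the embedding of) `Q`. -/
def CondMajorizes {X Y X' Y' : Type*} [Fintype X] [Fintype Y] [Fintype X'] [Fintype Y']
    (P : Matrix X Y ℝ) (Q : Matrix X' Y' ℝ) : Prop :=
  ∃ (m n n' : ℕ) (P' : Matrix (Fin m) (Fin n) ℝ) (Q' : Matrix (Fin m) (Fin n') ℝ),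
    Embeds P P' ∧ Embeds Q Q' ∧ CondMixed P' Q'

/-- Kronecker product of matrices. -/
def kron {X Y X' Y' : Type*} (P : Matrix X Y ℝ) (Q : Matrix X' Y' ℝ) :
    Matrix (X × X') (Y × Y') ℝ :=
  Matrix.of fun x y => P x.1 y.1 * Q x.2 y.2

/-- `n`-fold Kronecker power of a matrix. -/
def kronPow {X Y : Type*} (P : Matrix X Y ℝ) (n : ℕ) :
    Matrix (Fin n → X) (Fin n → Y) ℝ :=
  Matrix.of fun x y => ∏ i, P (x i) (y i)

/-- Sum of all entries of a matrix. -/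
def totalMass {X Y : Type*} [Fintype X] [Fintype Y] (P : Matrix X Y ℝ) : ℝ :=
  ∑ x, ∑ y, P x y

/-- `α/(1-α)`, with the convention that it equals `-1` at `α = ∞`. -/
def aRatio (α : ℝ≥0∞) : ℝ := if α = ⊤ then -1 else α.toReal / (1 - α.toReal)

/-- `α/(α-1)`, with the convention that it equals `1` at `α = ∞`. -/
def aRatio' (α : ℝ≥0∞) : ℝ := if α = ⊤ then 1 else α.toReal / (α.toReal - 1)

/-- Rényi relative entropy `D_α(p‖r)`. -/
def relRenyi {X : Type*} [Fintype X] (α : ℝ≥0∞) (p r : X → ℝ) : ℝ :=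
  if α = 1 then ∑ x, p x * log2 (p x / r x)
  else if α = ⊤ then log2 (⨆ x, p x / r x)
  else (α.toReal - 1)⁻¹ * log2 (∑ x, p x ^ α.toReal * r x ^ (1 - α.toReal))

/-- The quantity `I_{t,τ}(P‖R)`. -/
def Ibulk {X Y : Type*} [Fintype X] [Fintype Y] (t : ℝ) (τ : Measure ℝ≥0∞)
    (P : Matrix X Y ℝ) (R : X → ℝ) : ℝ :=
  -t⁻¹ * log2 (∑ y ∈ Finset.univ.filter (fun y => 0 < margY P y),
    margY P y * exp2 (-t * ∫ α, relRenyi α (condX P y) R ∂τ))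

/-- The quantity `I_{-∞,τ}(P‖R)`. -/
def InegInf {X Y : Type*} [Fintype X] [Fintype Y] (τ : Measure ℝ≥0∞)
    (P : Matrix X Y ℝ) (R : X → ℝ) : ℝ :=
  sSup ((fun y => ∫ α, relRenyi α (condX P y) R ∂τ) '' {y | 0 < margY P y})

/-- A conditioned `R`-preserving channel maps `P` to `Q`. -/
def CondPreserving {X Y Y' : Type*} [Fintype X] [Fintype Y] [Fintype Y'] (R : X → ℝ)
    (P : Matrix X Y ℝ) (Q : Matrix X Y' ℝ) : Prop :=
  ∃ (k : ℕ) (G : Fin k → Matrix X X ℝ) (D : Fin k → Matrix Y Y' ℝ),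
    (∀ i a b, 0 ≤ G i a b) ∧
    (∀ i b, ∑ a, G i a b = 1) ∧
    (∀ i, (G i).mulVec R = R) ∧
    (∀ i a b, 0 ≤ D i a b) ∧
    (∀ a, ∑ b, ∑ i, D i a b = 1) ∧
    Q = ∑ i, G i * P * D i

/-- Total variation distance between two matrices. -/
def tvDist {X Y : Type*} [Fintype X] [Fintype Y] (P Q : Matrix X Y ℝ) : ℝ :=
  (1 / 2) * ∑ x, ∑ y, |P x y - Q x y|

namespace S13

lemma exp2_pos (x : ℝ) : 0 < exp2 x := Real.rpow_pos_of_pos two_pos x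

lemma exp2_add (x y : ℝ) : exp2 (x + y) = exp2 x * exp2 y := Real.rpow_add two_pos x y

lemma exp2_log2 {x : ℝ} (hx : 0 < x) : exp2 (log2 x) = x :=
  Real.rpow_logb two_pos (by norm_num) hx

lemma log2_exp2 (x : ℝ) : log2 (exp2 x) = x := Real.logb_rpow two_pos (by norm_num)

lemma exp2_mono {x y : ℝ} (h : x ≤ y) : exp2 x ≤ exp2 y :=
  (Real.rpow_le_rpow_left_iff one_lt_two).2 h

lemma log2_eq (x : ℝ) : log2 x = Real.log x / Real.log 2 := (Real.log_div_log).symm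

lemma log_two_pos : (0:ℝ) < Real.log 2 := Real.log_pos one_lt_two

lemma log2_mul_log (x : ℝ) : log2 x * Real.log 2 = Real.log x := by
  rw [log2_eq, div_mul_cancel₀]
  exact log_two_pos.ne'

lemma exp2_eq_exp (x : ℝ) : exp2 x = Real.exp (x * Real.log 2) := by
  rw [exp2, Real.rpow_def_of_pos two_pos, mul_comm]

lemma log2_nonneg {x : ℝ} (h : 1 ≤ x) : 0 ≤ log2 x := Real.logb_nonneg one_lt_two h

lemma log2_mono {x y : ℝ} (hx : 0 < x) (h : x ≤ y) : log2 x ≤ log2 y :=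
  Real.logb_le_logb_of_le one_lt_two hx h

lemma log2_nonpos {x : ℝ} (h0 : 0 ≤ x) (h : x ≤ 1) : log2 x ≤ 0 :=
  Real.logb_nonpos one_lt_two h0 h

lemma log2_div {x y : ℝ} (hx : x ≠ 0) (hy : y ≠ 0) : log2 (x / y) = log2 x - log2 y :=
  Real.logb_div hx hy

lemma log2_mul {x y : ℝ} (hx : x ≠ 0) (hy : y ≠ 0) : log2 (x * y) = log2 x + log2 y :=
  Real.logb_mul hx hy

lemma log2_rpow {x : ℝ} (hx : 0 < x) (y : ℝ) : log2 (x ^ y) = y * log2 x :=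
  Real.logb_rpow_eq_mul_logb_of_pos hx

lemma one_sub_inv_le_log {u : ℝ} (hu : 0 < u) : 1 - u⁻¹ ≤ Real.log u := by
  have h := Real.log_le_sub_one_of_pos (inv_pos.2 hu)
  rw [Real.log_inv] at h
  linarith

/-- Forward integral AM-GM. -/
lemma amgm_forward {μ : Measure ℝ≥0∞} {w c : ℝ≥0∞ → ℝ} {W lam : ℝ}
    (hW : 0 ≤ W) (hlam : 0 < lam)
    (hw_int : Integrable w μ) (hw0 : 0 ≤ᵐ[μ] w)
    (hc_pos : ∀ᵐ α ∂μ, 0 < c α)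
    (hwc : Integrable (fun α => w α * c α) μ)
    (hwlc : Integrable (fun α => w α * log2 (c α)) μ)
    (hsum : W + ∫ α, w α ∂μ = 1) :
    exp2 (W * log2 lam + ∫ α, w α * log2 (c α) ∂μ) ≤ W * lam + ∫ α, w α * c α ∂μ := by
  have hwc0 : 0 ≤ ∫ α, w α * c α ∂μ := by
    refine integral_nonneg_of_ae ?_
    filter_upwards [hw0, hc_pos] with α h1 h2
    exact mul_nonneg h1 h2.le
  set A := W * lam + ∫ α, w α * c α ∂μ with hA
  have hApos : 0 < A := by
    rcases eq_or_lt_of_le hW with hW0 | hW0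
    · have hint1 : ∫ α, w α ∂μ = 1 := by rw [← hsum, ← hW0]; ring
      have : 0 < ∫ α, w α * c α ∂μ := by
        rcases eq_or_lt_of_le hwc0 with h0 | h0
        · exfalso
          have hae : (fun α => w α * c α) =ᵐ[μ] 0 := by
            refine (integral_eq_zero_iff_of_nonneg_ae ?_ hwc).1 h0.symm
            filter_upwards [hw0, hc_pos] with α h1 h2 using mul_nonneg h1 h2.le
          have hw_ae : w =ᵐ[μ] 0 := by
            filter_upwards [hae, hc_pos] with α h1 h2
            rcases mul_eq_zero.1 h1 with h | h
            · exact h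
            · exact absurd h h2.ne'
          rw [integral_congr_ae hw_ae] at hint1
          simp at hint1
        · exact h0
      rw [hA, ← hW0]; simpa using this
    · have : 0 < W * lam := mul_pos hW0 hlam
      rw [hA]; linarith
  have hwlc' : Integrable (fun α => w α * Real.log (c α)) μ := by
    refine (hwlc.const_mul (Real.log 2)).congr
      (Filter.Eventually.of_forall fun α => ?_)
    show Real.log 2 * (w α * log2 (c α)) = w α * Real.log (c α)
    rw [log2_eq]; field_simp
  have hintsub : Integrable (fun α => w α * (Real.log (c α) - Real.log A)) μ := by
    refine (hwlc'.sub (hw_int.mul_const (Real.log A))).congr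
      (Filter.Eventually.of_forall fun α => ?_)
    show w α * Real.log (c α) - w α * Real.log A = _
    ring
  have key : W * Real.log lam + ∫ α, w α * Real.log (c α) ∂μ ≤ Real.log A := by
    have h1 : ∀ᵐ α ∂μ, w α * (Real.log (c α) - Real.log A) ≤ w α * (c α / A - 1) := by
      filter_upwards [hw0, hc_pos] with α h1 h2
      refine mul_le_mul_of_nonneg_left ?_ h1
      have := Real.log_le_sub_one_of_pos (div_pos h2 hApos)
      rwa [Real.log_div h2.ne' hApos.ne'] at this
    have hint2 : Integrable (fun α => w α * (c α / A - 1)) μ := by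
      refine ((hwc.div_const A).sub hw_int).congr
        (Filter.Eventually.of_forall fun α => ?_)
      show w α * c α / A - w α = _
      ring
    have h2 := integral_mono_ae hintsub hint2 h1
    have h3 : ∫ α, w α * (Real.log (c α) - Real.log A) ∂μ
        = (∫ α, w α * Real.log (c α) ∂μ) - (∫ α, w α ∂μ) * Real.log A := by
      rw [← integral_mul_const, ← integral_sub hwlc' (hw_int.mul_const _)]
      congr 1; funext α; ring
    have h4 : ∫ α, w α * (c α / A - 1) ∂μ
        = (∫ α, w α * c α ∂μ) / A - ∫ α, w α ∂μ := by
      rw [← integral_div, ← integral_sub (hwc.div_const A) hw_int]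
      congr 1; funext α; ring
    have h5 : W * (Real.log lam - Real.log A) ≤ W * (lam / A - 1) := by
      refine mul_le_mul_of_nonneg_left ?_ hW
      have := Real.log_le_sub_one_of_pos (div_pos hlam hApos)
      rwa [Real.log_div hlam.ne' hApos.ne'] at this
    have hAA : W * (lam / A) + (∫ α, w α * c α ∂μ) / A = 1 := by
      field_simp
      exact hA.symm
    rw [h3, h4] at h2
    have h5' : W * Real.log lam ≤ W * (lam / A) - W + W * Real.log A := by
      rw [mul_sub, mul_sub] at h5; linarith
    have h2' : ∫ α, w α * Real.log (c α) ∂μ ≤ (∫ α, w α * c α ∂μ) / A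
        - (∫ α, w α ∂μ) + (∫ α, w α ∂μ) * Real.log A := by linarith
    have hmul : W * Real.log A + (∫ α, w α ∂μ) * Real.log A = Real.log A := by
      linear_combination (Real.log A) * hsum
    linarith [h5', h2', hAA, hmul, hsum]
  have hE : exp2 (W * log2 lam + ∫ α, w α * log2 (c α) ∂μ) = Real.exp
      (W * Real.log lam + ∫ α, w α * Real.log (c α) ∂μ) := by
    rw [exp2_eq_exp]
    congr 1
    rw [add_mul, mul_assoc, log2_mul_log]
    congr 1
    rw [← integral_mul_const]
    refine integral_congr_ae (Filter.Eventually.of_forall fun α => ?_)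
    show w α * log2 (c α) * Real.log 2 = _
    rw [mul_assoc, log2_mul_log]
  rw [hE]
  calc Real.exp (W * Real.log lam + ∫ α, w α * Real.log (c α) ∂μ)
      ≤ Real.exp (Real.log A) := Real.exp_le_exp.2 key
    _ = A := Real.exp_log hApos

/-- Reverse integral AM-GM: all weights nonpositive except one scalar weight `q`. -/
lemma amgm_reverse {μ : Measure ℝ≥0∞} {w c : ℝ≥0∞ → ℝ} {p lam q astar : ℝ}
    (hp : p ≤ 0) (hlam : 0 < lam) (hastar : 0 < astar)
    (hw_int : Integrable w μ) (hw0 : w ≤ᵐ[μ] 0)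
    (hc_pos : ∀ᵐ α ∂μ, 0 < c α)
    (hwc : Integrable (fun α => w α * c α) μ)
    (hwlc : Integrable (fun α => w α * log2 (c α)) μ)
    (hsum : p + q + ∫ α, w α ∂μ = 1) :
    p * lam + q * astar + ∫ α, w α * c α ∂μ ≤
      exp2 (p * log2 lam + q * log2 astar + ∫ α, w α * log2 (c α) ∂μ) := by
  have hwlc' : Integrable (fun α => w α * Real.log (c α)) μ := by
    refine (hwlc.const_mul (Real.log 2)).congr
      (Filter.Eventually.of_forall fun α => ?_)
    show Real.log 2 * (w α * log2 (c α)) = w α * Real.log (c α)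
    rw [log2_eq]; field_simp
  have hE : exp2 (p * log2 lam + q * log2 astar + ∫ α, w α * log2 (c α) ∂μ)
      = Real.exp (p * Real.log lam + q * Real.log astar + ∫ α, w α * Real.log (c α) ∂μ) := by
    rw [exp2_eq_exp]
    congr 1
    rw [add_mul, add_mul, mul_assoc, mul_assoc, log2_mul_log, log2_mul_log]
    congr 1
    rw [← integral_mul_const]
    refine integral_congr_ae (Filter.Eventually.of_forall fun α => ?_)
    show w α * log2 (c α) * Real.log 2 = _
    rw [mul_assoc, log2_mul_log]
  rw [hE]
  have hintsub : Integrable (fun α => w α * (Real.log (c α) - Real.log astar)) μ := by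
    refine (hwlc'.sub (hw_int.mul_const (Real.log astar))).congr
      (Filter.Eventually.of_forall fun α => ?_)
    show w α * Real.log (c α) - w α * Real.log astar = _
    ring
  have hint2 : Integrable (fun α => w α * (c α / astar - 1)) μ := by
    refine ((hwc.div_const astar).sub hw_int).congr
      (Filter.Eventually.of_forall fun α => ?_)
    show w α * c α / astar - w α = _
    ring
  -- pointwise bound
  have h1 : ∀ᵐ α ∂μ, w α * (c α / astar - 1) ≤ w α * (Real.log (c α) - Real.log astar) := by
    filter_upwards [hw0, hc_pos] with α h1 h2
    refine mul_le_mul_of_nonpos_left ?_ h1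
    have := Real.log_le_sub_one_of_pos (div_pos h2 hastar)
    rwa [Real.log_div h2.ne' hastar.ne'] at this
  have h2 := integral_mono_ae hint2 hintsub h1
  have h3 : ∫ α, w α * (Real.log (c α) - Real.log astar) ∂μ
      = (∫ α, w α * Real.log (c α) ∂μ) - (∫ α, w α ∂μ) * Real.log astar := by
    rw [← integral_mul_const, ← integral_sub hwlc' (hw_int.mul_const _)]
    congr 1; funext α; ring
  have h4 : ∫ α, w α * (c α / astar - 1) ∂μ
      = (∫ α, w α * c α ∂μ) / astar - ∫ α, w α ∂μ := by
    rw [← integral_div, ← integral_sub (hwc.div_const astar) hw_int]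
    congr 1; funext α; ring
  have h5 : p * (lam / astar - 1) ≤ p * (Real.log lam - Real.log astar) := by
    refine mul_le_mul_of_nonpos_left ?_ hp
    have := Real.log_le_sub_one_of_pos (div_pos hlam hastar)
    rwa [Real.log_div hlam.ne' hastar.ne'] at this
  set Z : ℝ := p * (Real.log lam - Real.log astar)
    + ((∫ α, w α * Real.log (c α) ∂μ) - (∫ α, w α ∂μ) * Real.log astar) with hZdef
  have hZfull : p * Real.log lam + q * Real.log astar + ∫ α, w α * Real.log (c α) ∂μ
      = Real.log astar + Z := by
    rw [hZdef]; linear_combination (Real.log astar) * hsum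
  rw [hZfull, Real.exp_add, Real.exp_log hastar]
  have hexpZ : 1 + Z ≤ Real.exp Z := by linarith [Real.add_one_le_exp Z]
  rw [h4, h3] at h2
  have hZlow : p * (lam / astar - 1)
      + ((∫ α, w α * c α ∂μ) / astar - ∫ α, w α ∂μ) ≤ Z := by
    rw [hZdef]; linarith [h2, h5]
  have hexpeq : astar * (1 + (p * (lam / astar - 1)
      + ((∫ α, w α * c α ∂μ) / astar - ∫ α, w α ∂μ)))
      = p * lam + q * astar + ∫ α, w α * c α ∂μ := by
    have hq : q = 1 - p - ∫ α, w α ∂μ := by linarith [hsum]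
    rw [hq]; field_simp; ring
  calc p * lam + q * astar + ∫ α, w α * c α ∂μ
      = astar * (1 + (p * (lam / astar - 1)
        + ((∫ α, w α * c α ∂μ) / astar - ∫ α, w α ∂μ))) := hexpeq.symm
    _ ≤ astar * (1 + Z) := by
        refine mul_le_mul_of_nonneg_left (by linarith [hZlow]) hastar.le
    _ ≤ astar * Real.exp Z := by
        refine mul_le_mul_of_nonneg_left hexpZ hastar.le

end S13
namespace S13

variable {X : Type*} [Fintype X]

lemma probvec_exists_pos {p : X → ℝ} (hp : IsProbVec p) : ∃ x, 0 < p x := by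
  by_contra h
  push_neg at h
  have hz : ∀ x, p x = 0 := fun x => le_antisymm (h x) (hp.1 x)
  have hsum := hp.2
  rw [Finset.sum_congr rfl (fun x _ => hz x)] at hsum
  simp at hsum

lemma probvec_le_one {p : X → ℝ} (hp : IsProbVec p) (x : X) : p x ≤ 1 := by
  have := Finset.single_le_sum (fun i (_ : i ∈ Finset.univ) => hp.1 i) (Finset.mem_univ x)
  rwa [hp.2] at this

lemma sum_rpow_pos {p : X → ℝ} (hp : ∀ x, 0 ≤ p x) (hex : ∃ x, 0 < p x) {a : ℝ}
    (ha : 0 < a) : 0 < ∑ x, p x ^ a := by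
  obtain ⟨x0, hx0⟩ := hex
  exact Finset.sum_pos' (fun x _ => Real.rpow_nonneg (hp x) a)
    ⟨x0, Finset.mem_univ _, Real.rpow_pos_of_pos hx0 a⟩

lemma log2_le_log2_of_inv_le {c m : ℝ} (hc : 0 < c) (h : c⁻¹ ≤ m) :
    -log2 m ≤ log2 c := by
  have h1 : log2 c⁻¹ ≤ log2 m := log2_mono (inv_pos.2 hc) h
  simp only [log2, Real.logb_inv] at h1 ⊢
  linarith

lemma renyi_bounds {p : X → ℝ} (hp : IsProbVec p) (α : ℝ≥0∞) :
    0 ≤ renyi α p ∧ renyi α p ≤ log2 (Fintype.card X) := by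
  obtain ⟨x0, hx0⟩ := probvec_exists_pos hp
  have hX : Nonempty X := ⟨x0⟩
  set c : ℝ := (Fintype.card X : ℝ) with hcdef
  have hc1 : 1 ≤ c := by rw [hcdef]; exact_mod_cast Fintype.card_pos
  have hc0 : 0 < c := lt_of_lt_of_le one_pos hc1
  by_cases h0 : α = 0
  · subst h0
    have hcard : Nat.card {x : X // 0 < p x} = Fintype.card {x : X // 0 < p x} :=
      Nat.card_eq_fintype_card
    have hpos : 0 < Fintype.card {x : X // 0 < p x} := Fintype.card_pos_iff.2 ⟨⟨x0, hx0⟩⟩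
    have hle : Fintype.card {x : X // 0 < p x} ≤ Fintype.card X := Fintype.card_subtype_le _
    rw [renyi, if_pos rfl, hcard]
    exact ⟨log2_nonneg (by exact_mod_cast hpos),
      log2_mono (by exact_mod_cast hpos) (by rw [hcdef]; exact_mod_cast hle)⟩
  by_cases h1 : α = 1
  · subst h1
    rw [renyi, if_neg h0, if_pos rfl]
    constructor
    · rw [neg_nonneg]
      refine Finset.sum_nonpos fun x _ => ?_
      rcases eq_or_lt_of_le (hp.1 x) with hx | hx
      · rw [← hx]; simp
      · exact mul_nonpos_of_nonneg_of_nonpos (hp.1 x)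
          (log2_nonpos (hp.1 x) (probvec_le_one hp x))
    · have hpt : ∀ x : X, (p x - c⁻¹) / Real.log 2 ≤ p x * log2 (p x) + p x * log2 c := by
        intro x
        rcases eq_or_lt_of_le (hp.1 x) with hx | hx
        · rw [← hx]
          simp only [zero_mul, zero_sub, add_zero, zero_add]
          exact div_nonpos_of_nonpos_of_nonneg (by simp [hc0.le]) log_two_pos.le
        · have hmul : p x * log2 (p x) + p x * log2 c = p x * log2 (p x * c) := by
            rw [log2_mul hx.ne' hc0.ne']; ring
          rw [hmul]
          have hl : (1 - (p x * c)⁻¹) / Real.log 2 ≤ log2 (p x * c) := by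
            rw [log2_eq]
            gcongr
            exact one_sub_inv_le_log (by positivity)
          calc (p x - c⁻¹) / Real.log 2
              = p x * ((1 - (p x * c)⁻¹) / Real.log 2) := by
                field_simp
            _ ≤ p x * log2 (p x * c) := mul_le_mul_of_nonneg_left hl hx.le
      have hs : ∑ x : X, ((p x - c⁻¹) / Real.log 2) = 0 := by
        rw [← Finset.sum_div, Finset.sum_sub_distrib, hp.2, Finset.sum_const,
          Finset.card_univ, nsmul_eq_mul, ← hcdef, mul_inv_cancel₀ hc0.ne']
        simp
      have hsum := Finset.sum_le_sum fun x (_ : x ∈ Finset.univ) => hpt x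
      rw [hs, Finset.sum_add_distrib, ← Finset.sum_mul, hp.2, one_mul] at hsum
      linarith
  by_cases htop : α = ⊤
  · subst htop
    rw [renyi, if_neg h0, if_neg h1, if_pos rfl]
    have hbdd : BddAbove (Set.range p) := Set.Finite.bddAbove (Set.finite_range p)
    have hm0 : 0 < ⨆ x, p x := lt_of_lt_of_le hx0 (le_ciSup hbdd x0)
    have hm1 : (⨆ x, p x) ≤ 1 := ciSup_le fun x => probvec_le_one hp x
    have hminv : c⁻¹ ≤ ⨆ x, p x := by
      have h3 : ∑ x : X, p x ≤ ∑ _x : X, ⨆ x, p x :=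
        Finset.sum_le_sum fun x _ => le_ciSup hbdd x
      rw [hp.2, Finset.sum_const, Finset.card_univ, nsmul_eq_mul, ← hcdef] at h3
      rw [inv_eq_one_div, div_le_iff₀ hc0]
      calc (1:ℝ) ≤ c * ⨆ x, p x := h3
        _ = (⨆ x, p x) * c := mul_comm _ _
    exact ⟨by rw [neg_nonneg]; exact log2_nonpos hm0.le hm1, log2_le_log2_of_inv_le hc0 hminv⟩
  · have ha : 0 < α.toReal := ENNReal.toReal_pos h0 htop
    set a := α.toReal with hadef
    have ha1 : a ≠ 1 := fun h => h1 ((ENNReal.toReal_eq_one_iff α).1 h)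
    rw [renyi, if_neg h0, if_neg h1, if_neg htop, ← hadef]
    set N := ∑ x, p x ^ a with hNdef
    have hNpos : 0 < N := sum_rpow_pos hp.1 ⟨x0, hx0⟩ ha
    have hwconst : ∑ _x : X, (c⁻¹ : ℝ) = 1 := by
      rw [Finset.sum_const, Finset.card_univ, nsmul_eq_mul, ← hcdef, mul_inv_cancel₀ hc0.ne']
    have hca : c * c⁻¹ ^ a = c ^ (1 - a) := by
      rw [Real.inv_rpow hc0.le, ← Real.rpow_neg hc0.le]
      nth_rewrite 1 [← Real.rpow_one c]
      rw [← Real.rpow_add hc0]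
      ring_nf
    rcases lt_or_gt_of_ne ha1 with hlt | hgt
    · have hN1 : 1 ≤ N := by
        rw [hNdef, ← hp.2]
        refine Finset.sum_le_sum fun x _ => ?_
        rcases eq_or_lt_of_le (hp.1 x) with hx | hx
        · rw [← hx, Real.zero_rpow ha.ne']
        · calc p x = p x ^ (1:ℝ) := (Real.rpow_one _).symm
            _ ≤ p x ^ a := Real.rpow_le_rpow_of_exponent_ge hx (probvec_le_one hp x) hlt.le
      have hNle : N ≤ c ^ (1 - a) := by
        have key := Real.arith_mean_le_rpow_mean Finset.univ (fun _ => c⁻¹)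
          (fun x => p x ^ a) (fun _ _ => by positivity) hwconst
          (fun x _ => Real.rpow_nonneg (hp.1 x) a)
          (p := a⁻¹) ((one_le_inv_iff₀).2 ⟨ha, hlt.le⟩)
        have hz : ∀ x : X, (p x ^ a) ^ (a⁻¹ : ℝ) = p x := fun x => by
          rw [← Real.rpow_mul (hp.1 x), mul_inv_cancel₀ ha.ne', Real.rpow_one]
        simp only [hz] at key
        rw [one_div, inv_inv, ← Finset.mul_sum, ← Finset.mul_sum, hp.2, mul_one] at key
        calc N = c * (c⁻¹ * N) := by field_simp
          _ ≤ c * c⁻¹ ^ a := mul_le_mul_of_nonneg_left key hc0.le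
          _ = c ^ (1 - a) := hca
      constructor
      · exact mul_nonneg (inv_nonneg.2 (by linarith)) (log2_nonneg hN1)
      · have hlog : log2 N ≤ (1 - a) * log2 c := by
          have := log2_mono hNpos hNle
          rwa [log2_rpow hc0] at this
        calc (1-a)⁻¹ * log2 N ≤ (1-a)⁻¹ * ((1-a) * log2 c) :=
              mul_le_mul_of_nonneg_left hlog (inv_nonneg.2 (by linarith))
          _ = log2 c := by
              rw [← mul_assoc, inv_mul_cancel₀ (by intro h; apply ha1; linarith), one_mul]
    · have hN1 : N ≤ 1 := by
        rw [hNdef, ← hp.2]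
        refine Finset.sum_le_sum fun x _ => ?_
        rcases eq_or_lt_of_le (hp.1 x) with hx | hx
        · rw [← hx, Real.zero_rpow ha.ne']
        · calc p x ^ a ≤ p x ^ (1:ℝ) :=
                Real.rpow_le_rpow_of_exponent_ge hx (probvec_le_one hp x) hgt.le
            _ = p x := Real.rpow_one _
      have hNge : c ^ (1 - a) ≤ N := by
        have key := Real.rpow_arith_mean_le_arith_mean_rpow Finset.univ (fun _ => c⁻¹)
          p (fun _ _ => by positivity) hwconst (fun x _ => hp.1 x) (p := a) hgt.le
        rw [← Finset.mul_sum, ← Finset.mul_sum, hp.2, mul_one] at key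
        calc c ^ (1 - a) = c * c⁻¹ ^ a := hca.symm
          _ ≤ c * (c⁻¹ * N) := mul_le_mul_of_nonneg_left key hc0.le
          _ = N := by field_simp
      have hinv : (1-a)⁻¹ ≤ 0 := inv_nonpos.2 (by linarith)
      constructor
      · have hlogN : log2 N ≤ 0 := log2_nonpos hNpos.le hN1
        nlinarith
      · have hlog : (1 - a) * log2 c ≤ log2 N := by
          have := log2_mono (by positivity) hNge
          rwa [log2_rpow hc0] at this
        calc (1-a)⁻¹ * log2 N ≤ (1-a)⁻¹ * ((1-a) * log2 c) :=
              mul_le_mul_of_nonpos_left hlog hinv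
          _ = log2 c := by
              rw [← mul_assoc, inv_mul_cancel₀ (by intro h; apply ha1; linarith), one_mul]

lemma renyi_nonneg {p : X → ℝ} (hp : IsProbVec p) (α : ℝ≥0∞) : 0 ≤ renyi α p :=
  (renyi_bounds hp α).1

lemma measurable_const_rpow {b : ℝ} (hb : 0 ≤ b) : Measurable fun r : ℝ => b ^ r := by
  rcases eq_or_lt_of_le hb with h | h
  · have heq : (fun r : ℝ => b ^ r) = fun r => if r = 0 then 1 else 0 := by
      funext r
      rcases eq_or_ne r 0 with h0 | h0
      · simp [h0]
      · simp [h0, ← h, Real.zero_rpow h0]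
    rw [heq]
    exact measurable_const.ite (measurableSet_eq) measurable_const
  · have heq : (fun r : ℝ => b ^ r) = fun r => Real.exp (Real.log b * r) := by
      funext r; rw [Real.rpow_def_of_pos h]
    rw [heq]
    exact Real.measurable_exp.comp (measurable_id.const_mul _)

lemma measurable_log2 : Measurable log2 := by
  have heq : log2 = fun x => Real.log x / Real.log 2 := funext log2_eq
  rw [heq]
  exact Real.measurable_log.div_const _

lemma measurable_renyi (p : X → ℝ) (hp : ∀ x, 0 ≤ p x) :
    Measurable fun α : ℝ≥0∞ => renyi α p := by
  unfold renyi
  refine Measurable.ite (measurableSet_eq) measurable_const ?_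
  refine Measurable.ite (measurableSet_eq) measurable_const ?_
  refine Measurable.ite (measurableSet_eq) measurable_const ?_
  refine Measurable.mul (measurable_const.sub ENNReal.measurable_toReal).inv ?_
  refine measurable_log2.comp ?_
  refine Finset.measurable_sum Finset.univ fun x _ => ?_
  exact (measurable_const_rpow (hp x)).comp ENNReal.measurable_toReal

lemma integrable_renyi {p : X → ℝ} (hp : IsProbVec p) (τ : Measure ℝ≥0∞)
    [IsFiniteMeasure τ] : Integrable (fun α => renyi α p) τ := by
  refine Integrable.mono' (integrable_const (log2 (Fintype.card X)))
    ((measurable_renyi p hp.1).aestronglyMeasurable) ?_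
  refine Filter.Eventually.of_forall fun α => ?_
  obtain ⟨hb1, hb2⟩ := renyi_bounds hp α
  rw [Real.norm_eq_abs, abs_of_nonneg hb1]
  exact hb2

lemma measurable_aRatio : Measurable aRatio := by
  unfold aRatio
  refine Measurable.ite (measurableSet_eq) measurable_const ?_
  exact (ENNReal.measurable_toReal).div (measurable_const.sub ENNReal.measurable_toReal)

end S13

namespace S13

variable {d : ℕ}

def coneSet (d : ℕ) : Set (Fin d → ℝ) := {x | (∀ i, 0 ≤ x i) ∧ x ≠ 0}

lemma cone_exists_pos {x : Fin d → ℝ} (hx : x ∈ coneSet d) : ∃ i, 0 < x i := by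
  by_contra h
  push_neg at h
  exact hx.2 (funext fun i => le_antisymm (h i) (hx.1 i))

lemma cone_sum_pos {x : Fin d → ℝ} (hx : x ∈ coneSet d) : 0 < ∑ i, x i := by
  obtain ⟨i, hi⟩ := cone_exists_pos hx
  exact Finset.sum_pos' (fun j _ => hx.1 j) ⟨i, Finset.mem_univ i, hi⟩

def pvec (x : Fin d → ℝ) : Fin d → ℝ := fun i => x i / ∑ j, x j

lemma pvec_prob {x : Fin d → ℝ} (hx : x ∈ coneSet d) : IsProbVec (pvec x) := by
  refine ⟨fun i => div_nonneg (hx.1 i) (cone_sum_pos hx).le, ?_⟩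
  show ∑ i, x i / ∑ j, x j = 1
  rw [← Finset.sum_div, div_self (cone_sum_pos hx).ne']

def Mnorm (a : ℝ) (x : Fin d → ℝ) : ℝ := (∑ i, x i ^ a) ^ a⁻¹

def ccf (x z : Fin d → ℝ) : ℝ≥0∞ → ℝ := fun α =>
  if α = 0 then (∑ i, x i) / (∑ i, z i)
  else if α = ⊤ then (⨆ i, x i) / (⨆ i, z i)
  else Mnorm α.toReal x / Mnorm α.toReal z

lemma fin_exists_sup (f : Fin d → ℝ) [Nonempty (Fin d)] :
    ∃ i0, (⨆ i, f i) = f i0 ∧ ∀ j, f j ≤ f i0 := by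
  obtain ⟨i0, h⟩ := Finite.exists_max f
  exact ⟨i0, le_antisymm (ciSup_le h)
    (le_ciSup (Set.Finite.bddAbove (Set.finite_range f)) i0), h⟩

lemma sup_pos {x : Fin d → ℝ} (hx : x ∈ coneSet d) : 0 < ⨆ i, x i := by
  obtain ⟨i, hi⟩ := cone_exists_pos hx
  have : Nonempty (Fin d) := ⟨i⟩
  exact lt_of_lt_of_le hi (le_ciSup (Set.Finite.bddAbove (Set.finite_range x)) i)

lemma iSup_div_const (f : Fin d → ℝ) {cst : ℝ} (hc : 0 < cst) [Nonempty (Fin d)] :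
    (⨆ i, f i / cst) = (⨆ i, f i) / cst := by
  obtain ⟨i0, heq, hmax⟩ := fin_exists_sup f
  rw [heq]
  refine le_antisymm (ciSup_le fun j => by gcongr; exact hmax j) ?_
  exact le_ciSup (Set.Finite.bddAbove (Set.finite_range fun i => f i / cst)) i0

lemma renyi_pvec_eq {x : Fin d → ℝ} (hx : x ∈ coneSet d) {α : ℝ≥0∞}
    (h0 : α ≠ 0) (h1 : α ≠ 1) (ht : α ≠ ⊤) :
    renyi α (pvec x) = (1 - α.toReal)⁻¹ *
      (log2 (∑ i, x i ^ α.toReal) - α.toReal * log2 (∑ i, x i)) := by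
  have ha : 0 < α.toReal := ENNReal.toReal_pos h0 ht
  have hS : 0 < ∑ j, x j := cone_sum_pos hx
  rw [renyi, if_neg h0, if_neg h1, if_neg ht]
  congr 1
  have hsum : ∑ i, pvec x i ^ α.toReal
      = (∑ i, x i ^ α.toReal) / (∑ j, x j) ^ α.toReal := by
    rw [Finset.sum_div]
    exact Finset.sum_congr rfl fun i _ => Real.div_rpow (hx.1 i) hS.le _
  rw [hsum, log2_div (ne_of_gt (sum_rpow_pos hx.1 (cone_exists_pos hx) ha))
    (ne_of_gt (Real.rpow_pos_of_pos hS _)), log2_rpow hS]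

lemma renyi_pvec_top {x : Fin d → ℝ} (hx : x ∈ coneSet d) :
    renyi ⊤ (pvec x) = -(log2 (⨆ i, x i) - log2 (∑ i, x i)) := by
  obtain ⟨i, hi⟩ := cone_exists_pos hx
  have : Nonempty (Fin d) := ⟨i⟩
  have hS : 0 < ∑ j, x j := cone_sum_pos hx
  rw [renyi, if_neg (by simp), if_neg (by simp), if_pos rfl]
  have hsup : (⨆ i, pvec x i) = (⨆ i, x i) / ∑ j, x j := iSup_div_const x hS
  rw [hsup, log2_div (sup_pos hx).ne' hS.ne']

lemma renyi_pvec_zero {x : Fin d → ℝ} (hx : x ∈ coneSet d) :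
    renyi 0 (pvec x) = log2 (Nat.card {i : Fin d // 0 < x i}) := by
  have hS : 0 < ∑ j, x j := cone_sum_pos hx
  rw [renyi, if_pos rfl]
  congr 2
  refine Nat.card_congr (Equiv.subtypeEquivRight fun i => ?_)
  simp only [pvec]
  constructor
  · intro h
    have := mul_pos h hS
    rwa [div_mul_cancel₀ _ hS.ne'] at this
  · intro h; exact div_pos h hS

lemma Mnorm_pos {x : Fin d → ℝ} (hx : x ∈ coneSet d) {a : ℝ} (ha : 0 < a) :
    0 < Mnorm a x :=
  Real.rpow_pos_of_pos (sum_rpow_pos hx.1 (cone_exists_pos hx) ha) _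

lemma Mnorm_mono {x z : Fin d → ℝ} (hx : ∀ i, 0 ≤ x i) (hxz : ∀ i, x i ≤ z i)
    {a : ℝ} (ha : 0 < a) : Mnorm a x ≤ Mnorm a z := by
  refine Real.rpow_le_rpow (Finset.sum_nonneg fun i _ => Real.rpow_nonneg (hx i) _)
    (Finset.sum_le_sum fun i _ => Real.rpow_le_rpow (hx i) (hxz i) ha.le)
    (inv_nonneg.2 ha.le)

lemma log2_Mnorm {x : Fin d → ℝ} (hx : x ∈ coneSet d) {a : ℝ} (ha : 0 < a) :
    log2 (Mnorm a x) = a⁻¹ * log2 (∑ i, x i ^ a) :=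
  log2_rpow (sum_rpow_pos hx.1 (cone_exists_pos hx) ha) _

/-- Reverse Minkowski inequality for `0 < a < 1`. -/
lemma rev_minkowski {x y : Fin d → ℝ} (hx : x ∈ coneSet d) (hy : y ∈ coneSet d)
    {a : ℝ} (ha0 : 0 < a) (ha1 : a < 1) :
    Mnorm a x + Mnorm a y ≤ Mnorm a (x + y) := by
  set XX := Mnorm a x with hXX
  set YY := Mnorm a y with hYY
  have hXXpos : 0 < XX := Mnorm_pos hx ha0
  have hYYpos : 0 < YY := Mnorm_pos hy ha0
  set T := XX + YY with hT
  have hTpos : 0 < T := by positivity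
  have hNx : (XX : ℝ) ^ a = ∑ i, x i ^ a := by
    rw [hXX, Mnorm, ← Real.rpow_mul (Finset.sum_nonneg fun i _ => Real.rpow_nonneg (hx.1 i) _),
      inv_mul_cancel₀ ha0.ne', Real.rpow_one]
  have hNy : (YY : ℝ) ^ a = ∑ i, y i ^ a := by
    rw [hYY, Mnorm, ← Real.rpow_mul (Finset.sum_nonneg fun i _ => Real.rpow_nonneg (hy.1 i) _),
      inv_mul_cancel₀ ha0.ne', Real.rpow_one]
  have hpt : ∀ i, XX / T * (x i * (T / XX)) ^ a + YY / T * (y i * (T / YY)) ^ a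
      ≤ (x i + y i) ^ a := by
    intro i
    have h1 : (0:ℝ) ≤ x i * (T / XX) := mul_nonneg (hx.1 i) (by positivity)
    have h2 : (0:ℝ) ≤ y i * (T / YY) := mul_nonneg (hy.1 i) (by positivity)
    have hw : XX / T + YY / T = 1 := by
      rw [← add_div, ← hT, div_self hTpos.ne']
    have hcon := (Real.concaveOn_rpow ha0.le ha1.le).2
      (Set.mem_Ici.2 h1) (Set.mem_Ici.2 h2)
      (by positivity : (0:ℝ) ≤ XX / T) (by positivity : (0:ℝ) ≤ YY / T) hw
    simp only [smul_eq_mul] at hcon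
    have e1 : XX / T * (x i * (T / XX)) = x i := by
      field_simp
    have e2 : YY / T * (y i * (T / YY)) = y i := by
      field_simp
    rw [e1, e2] at hcon
    exact hcon
  have hsum : XX / T * ((T / XX) ^ a * ∑ i, x i ^ a)
      + YY / T * ((T / YY) ^ a * ∑ i, y i ^ a) ≤ ∑ i, (x i + y i) ^ a := by
    have := Finset.sum_le_sum fun i (_ : i ∈ Finset.univ) => hpt i
    calc XX / T * ((T / XX) ^ a * ∑ i, x i ^ a) + YY / T * ((T / YY) ^ a * ∑ i, y i ^ a)
        = ∑ i, (XX / T * (x i * (T / XX)) ^ a + YY / T * (y i * (T / YY)) ^ a) := by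
          rw [Finset.sum_add_distrib]
          congr 1
          · rw [Finset.mul_sum, Finset.mul_sum]
            refine Finset.sum_congr rfl fun i _ => ?_
            rw [Real.mul_rpow (hx.1 i) (by positivity)]
            ring
          · rw [Finset.mul_sum, Finset.mul_sum]
            refine Finset.sum_congr rfl fun i _ => ?_
            rw [Real.mul_rpow (hy.1 i) (by positivity)]
            ring
      _ ≤ ∑ i, (x i + y i) ^ a := this
  have hXa : (0:ℝ) < XX ^ a := Real.rpow_pos_of_pos hXXpos a
  have hYa : (0:ℝ) < YY ^ a := Real.rpow_pos_of_pos hYYpos a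
  have hcalc1 : XX / T * ((T / XX) ^ a * ∑ i, x i ^ a) = XX * T ^ a / T := by
    rw [← hNx, Real.div_rpow hTpos.le hXXpos.le]
    field_simp
  have hcalc2 : YY / T * ((T / YY) ^ a * ∑ i, y i ^ a) = YY * T ^ a / T := by
    rw [← hNy, Real.div_rpow hTpos.le hYYpos.le]
    field_simp
  have hTa : T ^ a ≤ ∑ i, (x i + y i) ^ a := by
    have hmass : XX * T ^ a / T + YY * T ^ a / T = T ^ a := by
      field_simp
      ring
    rw [hcalc1, hcalc2] at hsum
    linarith
  calc XX + YY = (T ^ a) ^ a⁻¹ := by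
        rw [← Real.rpow_mul hTpos.le, mul_inv_cancel₀ ha0.ne', Real.rpow_one]
    _ ≤ (∑ i, (x i + y i) ^ a) ^ a⁻¹ :=
        Real.rpow_le_rpow (by positivity) hTa (inv_nonneg.2 ha0.le)
    _ = Mnorm a (x + y) := by rw [Mnorm]; simp only [Pi.add_apply]

/-- Forward Minkowski inequality for `1 ≤ a`. -/
lemma fwd_minkowski {x y : Fin d → ℝ} (hx : ∀ i, 0 ≤ x i) (hy : ∀ i, 0 ≤ y i)
    {a : ℝ} (ha : 1 ≤ a) : Mnorm a (x + y) ≤ Mnorm a x + Mnorm a y := by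
  have := Real.Lp_add_le_of_nonneg Finset.univ ha (fun i _ => hx i) (fun i _ => hy i)
  simp only [Mnorm, Pi.add_apply, ← one_div]
  exact this

lemma sup_subadd {x y : Fin d → ℝ} [Nonempty (Fin d)] :
    (⨆ i, (x + y) i) ≤ (⨆ i, x i) + (⨆ i, y i) := by
  refine ciSup_le fun i => ?_
  simp only [Pi.add_apply]
  exact add_le_add (le_ciSup (Set.Finite.bddAbove (Set.finite_range x)) i)
    (le_ciSup (Set.Finite.bddAbove (Set.finite_range y)) i)

lemma sup_mono' {x z : Fin d → ℝ} [Nonempty (Fin d)] (h : ∀ i, x i ≤ z i) :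
    (⨆ i, x i) ≤ (⨆ i, z i) :=
  ciSup_le fun i => (h i).trans (le_ciSup (Set.Finite.bddAbove (Set.finite_range z)) i)

/-- The master pointwise identity, for `α ∉ {0, 1}`. -/
lemma master_eq {x z : Fin d → ℝ} (hx : x ∈ coneSet d) (hz : z ∈ coneSet d)
    {α : ℝ≥0∞} (h0 : α ≠ 0) (h1 : α ≠ 1) (t : ℝ) :
    t * renyi α (pvec x) = t * aRatio α * log2 (ccf x z α)
      - t * aRatio α * log2 ((∑ i, x i) / (∑ i, z i)) + t * renyi α (pvec z) := by
  have hSx : 0 < ∑ i, x i := cone_sum_pos hx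
  have hSz : 0 < ∑ i, z i := cone_sum_pos hz
  have hlam : log2 ((∑ i, x i) / (∑ i, z i)) = log2 (∑ i, x i) - log2 (∑ i, z i) :=
    log2_div hSx.ne' hSz.ne'
  by_cases ht : α = ⊤
  · subst ht
    obtain ⟨i, hi⟩ := cone_exists_pos hx
    have : Nonempty (Fin d) := ⟨i⟩
    rw [renyi_pvec_top hx, renyi_pvec_top hz, aRatio, if_pos rfl,
      ccf, if_neg (by simp), if_pos rfl,
      log2_div (sup_pos hx).ne' (sup_pos hz).ne', hlam]
    ring
  · have ha : 0 < α.toReal := ENNReal.toReal_pos h0 ht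
    have ha1 : α.toReal ≠ 1 := fun h => h1 ((ENNReal.toReal_eq_one_iff α).1 h)
    have h1a : 1 - α.toReal ≠ 0 := fun h => ha1 (by linarith)
    rw [renyi_pvec_eq hx h0 h1 ht, renyi_pvec_eq hz h0 h1 ht, aRatio, if_neg ht,
      ccf, if_neg h0, if_neg ht, hlam,
      log2_div (Mnorm_pos hx ha).ne' (Mnorm_pos hz ha).ne',
      log2_Mnorm hx ha, log2_Mnorm hz ha]
    field_simp
    ring

end S13
namespace S13

variable {d : ℕ}

lemma renyi_zero_mono {X : Type*} [Fintype X] {r s : X → ℝ} (hr : IsProbVec r)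
    (hsub : ∀ i, 0 < r i → 0 < s i) : renyi 0 r ≤ renyi 0 s := by
  rw [renyi, if_pos rfl, renyi, if_pos rfl]
  obtain ⟨x0, hx0⟩ := probvec_exists_pos hr
  have h1 : 0 < Fintype.card {i : X // 0 < r i} := Fintype.card_pos_iff.2 ⟨⟨x0, hx0⟩⟩
  have h2 : Fintype.card {i : X // 0 < r i} ≤ Fintype.card {i : X // 0 < s i} :=
    Fintype.card_subtype_mono _ _ hsub
  rw [Nat.card_eq_fintype_card, Nat.card_eq_fintype_card]
  exact log2_mono (by exact_mod_cast h1) (by exact_mod_cast h2)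

lemma renyi_mix {X : Type*} [Fintype X] {p q : X → ℝ} (hp : IsProbVec p)
    (hq : IsProbVec q) {l m : ℝ} (hl : 0 ≤ l) (hm : 0 ≤ m) (hlm : l + m = 1)
    {α : ℝ≥0∞} (hα : α ≤ 1) :
    l * renyi α p + m * renyi α q ≤ renyi α (fun i => l * p i + m * q i) := by
  have hmix : IsProbVec (fun i => l * p i + m * q i) := by
    constructor
    · intro i
      exact add_nonneg (mul_nonneg hl (hp.1 i)) (mul_nonneg hm (hq.1 i))
    · rw [Finset.sum_add_distrib, ← Finset.mul_sum, ← Finset.mul_sum, hp.2, hq.2]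
      simpa using hlm
  have htop : α ≠ ⊤ := (lt_of_le_of_lt hα ENNReal.one_lt_top).ne
  by_cases h0 : α = 0
  · subst h0
    have hA : l * renyi 0 p ≤ l * renyi 0 (fun i => l * p i + m * q i) := by
      rcases eq_or_lt_of_le hl with h | h
      · rw [← h, zero_mul, zero_mul]
      · refine mul_le_mul_of_nonneg_left (renyi_zero_mono hp fun i hi => ?_) h.le
        exact add_pos_of_pos_of_nonneg (mul_pos h hi) (mul_nonneg hm (hq.1 i))
    have hB : m * renyi 0 q ≤ m * renyi 0 (fun i => l * p i + m * q i) := by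
      rcases eq_or_lt_of_le hm with h | h
      · rw [← h, zero_mul, zero_mul]
      · refine mul_le_mul_of_nonneg_left (renyi_zero_mono hq fun i hi => ?_) h.le
        exact add_pos_of_nonneg_of_pos (mul_nonneg hl (hp.1 i)) (mul_pos h hi)
    have hC : l * renyi 0 (fun i => l * p i + m * q i)
        + m * renyi 0 (fun i => l * p i + m * q i)
        = renyi 0 (fun i => l * p i + m * q i) := by
      linear_combination (renyi 0 (fun i => l * p i + m * q i)) * hlm
    linarith [hA, hB, hC]
  by_cases h1 : α = 1
  · subst h1
    have hpt : ∀ i, (l * p i + m * q i) * log2 (l * p i + m * q i)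
        ≤ l * (p i * log2 (p i)) + m * (q i * log2 (q i)) := by
      intro i
      have hcon := Real.convexOn_mul_log.2 (Set.mem_Ici.2 (hp.1 i)) (Set.mem_Ici.2 (hq.1 i))
        hl hm hlm
      simp only [smul_eq_mul] at hcon
      have hlt : (l * p i + m * q i) * Real.log (l * p i + m * q i)
          ≤ l * (p i * Real.log (p i)) + m * (q i * Real.log (q i)) := hcon
      rw [log2_eq, log2_eq, log2_eq]
      calc (l * p i + m * q i) * (Real.log (l * p i + m * q i) / Real.log 2)
          = ((l * p i + m * q i) * Real.log (l * p i + m * q i)) / Real.log 2 := by ring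
        _ ≤ (l * (p i * Real.log (p i)) + m * (q i * Real.log (q i))) / Real.log 2 := by
            gcongr
        _ = l * (p i * (Real.log (p i) / Real.log 2))
            + m * (q i * (Real.log (q i) / Real.log 2)) := by ring
    rw [renyi, if_neg (by norm_num), if_pos rfl, renyi, if_neg (by norm_num), if_pos rfl,
      renyi, if_neg (by norm_num), if_pos rfl]
    have hsum := Finset.sum_le_sum fun i (_ : i ∈ Finset.univ) => hpt i
    rw [Finset.sum_add_distrib, ← Finset.mul_sum, ← Finset.mul_sum] at hsum
    linarith
  · have hlt1 : α < 1 := lt_of_le_of_ne hα h1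
    have ha0 : 0 < α.toReal := ENNReal.toReal_pos h0 htop
    have ha1 : α.toReal < 1 := by
      have := (ENNReal.toReal_lt_toReal htop ENNReal.one_ne_top).2 hlt1
      simpa using this
    set a := α.toReal with hadef
    have hPpos : 0 < ∑ i, p i ^ a := sum_rpow_pos hp.1 (probvec_exists_pos hp) ha0
    have hQpos : 0 < ∑ i, q i ^ a := sum_rpow_pos hq.1 (probvec_exists_pos hq) ha0
    rw [renyi, if_neg h0, if_neg h1, if_neg htop, ← hadef,
      renyi, if_neg h0, if_neg h1, if_neg htop, ← hadef,
      renyi, if_neg h0, if_neg h1, if_neg htop, ← hadef]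
    have h1' : l * ∑ i, p i ^ a + m * ∑ i, q i ^ a ≤ ∑ i, (l * p i + m * q i) ^ a := by
      rw [Finset.mul_sum, Finset.mul_sum, ← Finset.sum_add_distrib]
      refine Finset.sum_le_sum fun i _ => ?_
      have hcon := (Real.concaveOn_rpow ha0.le ha1.le).2
        (Set.mem_Ici.2 (hp.1 i)) (Set.mem_Ici.2 (hq.1 i)) hl hm hlm
      simpa only [smul_eq_mul] using hcon
    have h2' : (∑ i, p i ^ a) ^ l * (∑ i, q i ^ a) ^ m
        ≤ l * ∑ i, p i ^ a + m * ∑ i, q i ^ a :=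
      Real.geom_mean_le_arith_mean2_weighted hl hm hPpos.le hQpos.le hlm
    have h3' : l * log2 (∑ i, p i ^ a) + m * log2 (∑ i, q i ^ a)
        = log2 ((∑ i, p i ^ a) ^ l * (∑ i, q i ^ a) ^ m) := by
      rw [log2_mul (Real.rpow_pos_of_pos hPpos l).ne' (Real.rpow_pos_of_pos hQpos m).ne',
        log2_rpow hPpos, log2_rpow hQpos]
    have h4' : l * log2 (∑ i, p i ^ a) + m * log2 (∑ i, q i ^ a)
        ≤ log2 (∑ i, (l * p i + m * q i) ^ a) := by
      rw [h3']
      exact log2_mono (by positivity) (h2'.trans h1')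
    calc l * ((1 - a)⁻¹ * log2 (∑ i, p i ^ a)) + m * ((1 - a)⁻¹ * log2 (∑ i, q i ^ a))
        = (1 - a)⁻¹ * (l * log2 (∑ i, p i ^ a) + m * log2 (∑ i, q i ^ a)) := by ring
      _ ≤ (1 - a)⁻¹ * log2 (∑ i, (l * p i + m * q i) ^ a) :=
          mul_le_mul_of_nonneg_left h4' (inv_nonneg.2 (by linarith))

lemma cone_add {x y : Fin d → ℝ} (hx : x ∈ coneSet d) (hy : y ∈ coneSet d) :
    x + y ∈ coneSet d := by
  refine ⟨fun i => add_nonneg (hx.1 i) (hy.1 i), fun h => ?_⟩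
  obtain ⟨i, hi⟩ := cone_exists_pos hx
  have : (x + y) i = 0 := by rw [h]; rfl
  simp only [Pi.add_apply] at this
  nlinarith [hy.1 i]

lemma sum_add_eq {x y : Fin d → ℝ} : ∑ i, (x + y) i = (∑ i, x i) + ∑ i, y i := by
  simp only [Pi.add_apply]
  exact Finset.sum_add_distrib

lemma pvec_mix {x y : Fin d → ℝ} (hx : x ∈ coneSet d) (hy : y ∈ coneSet d) :
    pvec (x + y) = fun i => ((∑ j, x j) / ∑ j, (x + y) j) * pvec x i
      + ((∑ j, y j) / ∑ j, (x + y) j) * pvec y i := by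
  have hSx := cone_sum_pos hx
  have hSy := cone_sum_pos hy
  have hSz := cone_sum_pos (cone_add hx hy)
  funext i
  simp only [pvec, Pi.add_apply]
  simp only [Pi.add_apply] at hSz
  rw [Finset.sum_add_distrib] at hSz ⊢
  field_simp

/-- Subadditivity in the convex case (a): `t < 0`, `τ` supported on `[0,1]`. -/
lemma subadd_caseA {τ : MeasureTheory.Measure ℝ≥0∞} [MeasureTheory.IsProbabilityMeasure τ]
    {t : ℝ} (ht : t < 0) (hnull : τ {α | 1 < α} = 0)
    {x y : Fin d → ℝ} (hx : x ∈ coneSet d) (hy : y ∈ coneSet d) :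
    (∑ i, (x + y) i) * exp2 (t * ∫ α, renyi α (pvec (x + y)) ∂τ)
      ≤ (∑ i, x i) * exp2 (t * ∫ α, renyi α (pvec x) ∂τ)
        + (∑ i, y i) * exp2 (t * ∫ α, renyi α (pvec y) ∂τ) := by
  have hz := cone_add hx hy
  have hSx := cone_sum_pos hx
  have hSy := cone_sum_pos hy
  have hSz := cone_sum_pos hz
  set l := (∑ j, x j) / ∑ j, (x + y) j with hldef
  set m := (∑ j, y j) / ∑ j, (x + y) j with hmdef
  have hl : 0 ≤ l := div_nonneg hSx.le hSz.le
  have hm : 0 ≤ m := div_nonneg hSy.le hSz.le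
  have hlm : l + m = 1 := by
    rw [hldef, hmdef, ← add_div, sum_add_eq, div_self (by rw [sum_add_eq] at hSz; exact hSz.ne')]
  have hae : ∀ᵐ α ∂τ, α ≤ 1 := by
    rw [MeasureTheory.ae_iff]
    convert hnull using 2
    ext α
    simp [not_le]
  have hmono : l * ∫ α, renyi α (pvec x) ∂τ + m * ∫ α, renyi α (pvec y) ∂τ
      ≤ ∫ α, renyi α (pvec (x + y)) ∂τ := by
    have hint : ∫ α, l * renyi α (pvec x) + m * renyi α (pvec y) ∂τ
        = l * ∫ α, renyi α (pvec x) ∂τ + m * ∫ α, renyi α (pvec y) ∂τ := by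
      rw [MeasureTheory.integral_add ((integrable_renyi (pvec_prob hx) τ).const_mul l)
        ((integrable_renyi (pvec_prob hy) τ).const_mul m),
        MeasureTheory.integral_const_mul, MeasureTheory.integral_const_mul]
    rw [← hint]
    refine MeasureTheory.integral_mono_ae
      (((integrable_renyi (pvec_prob hx) τ).const_mul l).add
        ((integrable_renyi (pvec_prob hy) τ).const_mul m))
      (integrable_renyi (pvec_prob hz) τ) ?_
    filter_upwards [hae] with α hα
    have := renyi_mix (pvec_prob hx) (pvec_prob hy) hl hm hlm (α := α) hα
    rw [pvec_mix hx hy]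
    exact this
  have hexp : exp2 (t * ∫ α, renyi α (pvec (x + y)) ∂τ)
      ≤ l * exp2 (t * ∫ α, renyi α (pvec x) ∂τ)
        + m * exp2 (t * ∫ α, renyi α (pvec y) ∂τ) := by
    set u := t * ∫ α, renyi α (pvec x) ∂τ
    set v := t * ∫ α, renyi α (pvec y) ∂τ
    have h1 : t * ∫ α, renyi α (pvec (x + y)) ∂τ ≤ l * u + m * v := by
      have := mul_le_mul_of_nonpos_left hmono ht.le
      calc t * ∫ α, renyi α (pvec (x + y)) ∂τ
          ≤ t * (l * (∫ α, renyi α (pvec x) ∂τ) + m * ∫ α, renyi α (pvec y) ∂τ) := this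
        _ = l * u + m * v := by ring
    calc exp2 (t * ∫ α, renyi α (pvec (x + y)) ∂τ) ≤ exp2 (l * u + m * v) := exp2_mono h1
      _ = exp2 u ^ l * exp2 v ^ m := by
          rw [exp2_add]
          congr 1
          · rw [exp2, exp2, mul_comm, Real.rpow_mul (by norm_num : (0:ℝ) ≤ 2)]
          · rw [exp2, exp2, mul_comm, Real.rpow_mul (by norm_num : (0:ℝ) ≤ 2)]
      _ ≤ l * exp2 u + m * exp2 v :=
          Real.geom_mean_le_arith_mean2_weighted hl hm (exp2_pos _).le (exp2_pos _).le hlm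
  calc (∑ i, (x + y) i) * exp2 (t * ∫ α, renyi α (pvec (x + y)) ∂τ)
      ≤ (∑ i, (x + y) i) * (l * exp2 (t * ∫ α, renyi α (pvec x) ∂τ)
        + m * exp2 (t * ∫ α, renyi α (pvec y) ∂τ)) := by
        refine mul_le_mul_of_nonneg_left hexp ?_
        rw [sum_add_eq]; positivity
    _ = (∑ i, x i) * exp2 (t * ∫ α, renyi α (pvec x) ∂τ)
        + (∑ i, y i) * exp2 (t * ∫ α, renyi α (pvec y) ∂τ) := by
        rw [hldef, hmdef]
        simp only [sum_add_eq]
        field_simp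

end S13
namespace S13

variable {d : ℕ}

lemma aRatio_zero : aRatio 0 = 0 := by simp [aRatio]

lemma aRatio_nonneg_of_lt_one {α : ℝ≥0∞} (h : α < 1) : 0 ≤ aRatio α := by
  have htop : α ≠ ⊤ := (h.trans ENNReal.one_lt_top).ne
  have ha : α.toReal < 1 := by
    have := (ENNReal.toReal_lt_toReal htop ENNReal.one_ne_top).2 h
    simpa using this
  rw [aRatio, if_neg htop]
  exact div_nonneg ENNReal.toReal_nonneg (by linarith)

lemma ae_lt_one {τ : MeasureTheory.Measure ℝ≥0∞} (h1 : τ {1} = 0)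
    (h2 : τ {α | 1 < α} = 0) : ∀ᵐ α ∂τ, α < 1 := by
  rw [MeasureTheory.ae_iff]
  refine MeasureTheory.measure_mono_null ?_ (MeasureTheory.measure_union_null h1 h2)
  intro α hα
  simp only [Set.mem_setOf_eq, not_lt] at hα
  rcases eq_or_lt_of_le hα with h | h
  · exact Set.mem_union_left _ (by simp [← h])
  · exact Set.mem_union_right _ h

lemma toReal_lt_one {α : ℝ≥0∞} (h : α < 1) : α.toReal < 1 := by
  have htop : α ≠ ⊤ := (h.trans ENNReal.one_lt_top).ne
  have := (ENNReal.toReal_lt_toReal htop ENNReal.one_ne_top).2 h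
  simpa using this

lemma ccf_zero (x z : Fin d → ℝ) : ccf x z 0 = (∑ i, x i) / (∑ i, z i) := if_pos rfl

lemma ccf_top (x z : Fin d → ℝ) : ccf x z ⊤ = (⨆ i, x i) / (⨆ i, z i) := by
  rw [ccf, if_neg (by simp), if_pos rfl]

lemma ccf_of_ne {x z : Fin d → ℝ} {α : ℝ≥0∞} (h0 : α ≠ 0) (ht : α ≠ ⊤) :
    ccf x z α = Mnorm α.toReal x / Mnorm α.toReal z := by
  rw [ccf, if_neg h0, if_neg ht]

lemma ccf_pos_le_one {x z : Fin d → ℝ} (hx : x ∈ coneSet d) (hz : z ∈ coneSet d)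
    (hxz : ∀ i, x i ≤ z i) (α : ℝ≥0∞) : 0 < ccf x z α ∧ ccf x z α ≤ 1 := by
  obtain ⟨i0, hi0⟩ := cone_exists_pos hx
  have : Nonempty (Fin d) := ⟨i0⟩
  by_cases h0 : α = 0
  · subst h0
    rw [ccf_zero]
    exact ⟨div_pos (cone_sum_pos hx) (cone_sum_pos hz),
      (div_le_one (cone_sum_pos hz)).2 (Finset.sum_le_sum fun i _ => hxz i)⟩
  by_cases ht : α = ⊤
  · subst ht
    rw [ccf_top]
    exact ⟨div_pos (sup_pos hx) (sup_pos hz),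
      (div_le_one (sup_pos hz)).2 (sup_mono' hxz)⟩
  · have ha : 0 < α.toReal := ENNReal.toReal_pos h0 ht
    rw [ccf_of_ne h0 ht]
    exact ⟨div_pos (Mnorm_pos hx ha) (Mnorm_pos hz ha),
      (div_le_one (Mnorm_pos hz ha)).2 (Mnorm_mono hx.1 hxz ha)⟩

lemma measurable_Mnorm {x : Fin d → ℝ} (hx : x ∈ coneSet d) :
    Measurable fun a : ℝ => Mnorm a x := by
  obtain ⟨i0, hi0⟩ := cone_exists_pos hx
  have hB : ∀ a : ℝ, 0 < ∑ i, x i ^ a := fun a =>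
    Finset.sum_pos' (fun i _ => Real.rpow_nonneg (hx.1 i) a)
      ⟨i0, Finset.mem_univ _, Real.rpow_pos_of_pos hi0 a⟩
  have heq : (fun a : ℝ => Mnorm a x)
      = fun a => Real.exp (Real.log (∑ i, x i ^ a) * a⁻¹) := by
    funext a; rw [Mnorm, Real.rpow_def_of_pos (hB a)]
  rw [heq]
  have hBm : Measurable fun a : ℝ => ∑ i, x i ^ a :=
    Finset.measurable_sum _ fun i _ => measurable_const_rpow (hx.1 i)
  exact Real.measurable_exp.comp ((Real.measurable_log.comp hBm).mul measurable_inv)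

lemma measurable_ccf {x z : Fin d → ℝ} (hx : x ∈ coneSet d) (hz : z ∈ coneSet d) :
    Measurable (ccf x z) := by
  unfold ccf
  refine Measurable.ite (measurableSet_eq) measurable_const ?_
  refine Measurable.ite (measurableSet_eq) measurable_const ?_
  exact ((measurable_Mnorm hx).comp ENNReal.measurable_toReal).div
    ((measurable_Mnorm hz).comp ENNReal.measurable_toReal)

lemma renyi_zero_pvec_mono {x z : Fin d → ℝ} (hx : x ∈ coneSet d) (hz : z ∈ coneSet d)
    (hxz : ∀ i, x i ≤ z i) : renyi 0 (pvec x) ≤ renyi 0 (pvec z) := by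
  refine renyi_zero_mono (pvec_prob hx) fun i hi => ?_
  have hSx := cone_sum_pos hx
  have hxi : 0 < x i := by
    have := mul_pos hi hSx
    simp only [pvec] at this
    rwa [div_mul_cancel₀ _ hSx.ne'] at this
  exact div_pos (lt_of_lt_of_le hxi (hxz i)) (cone_sum_pos hz)

lemma integrable_w_log_ccf {τ : MeasureTheory.Measure ℝ≥0∞}
    [MeasureTheory.IsProbabilityMeasure τ] {t : ℝ}
    (hwint : MeasureTheory.Integrable (fun α => t * aRatio α) τ)
    (hae1 : ∀ᵐ α ∂τ, α ≠ 1)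
    {x z : Fin d → ℝ} (hx : x ∈ coneSet d) (hz : z ∈ coneSet d)
    (hxz : ∀ i, x i ≤ z i) :
    MeasureTheory.Integrable (fun α => (t * aRatio α) * log2 (ccf x z α)) τ := by
  obtain ⟨i0, hi0⟩ := cone_exists_pos hx
  have hne : Nonempty (Fin d) := ⟨i0⟩
  set c : ℝ := (Fintype.card (Fin d) : ℝ) with hcdef
  have hc1 : 1 ≤ c := by rw [hcdef]; exact_mod_cast Fintype.card_pos
  set lam : ℝ := (∑ i, x i) / (∑ i, z i) with hlamdef
  refine MeasureTheory.Integrable.mono'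
    ((MeasureTheory.integrable_const (2 * |t| * log2 c)).add
      (hwint.abs.mul_const |log2 lam|))
    (((measurable_aRatio.const_mul t).mul
      (measurable_log2.comp (measurable_ccf hx hz))).aestronglyMeasurable) ?_
  filter_upwards [hae1] with α hα
  rw [Real.norm_eq_abs]
  by_cases h0 : α = 0
  · subst h0
    rw [aRatio_zero]
    simp only [mul_zero, zero_mul, abs_zero]
    have hlc : 0 ≤ log2 c := log2_nonneg hc1
    exact add_nonneg (mul_nonneg (by positivity) hlc)
      (mul_nonneg (abs_nonneg _) (abs_nonneg _))
  · have hmeq := master_eq hx hz h0 hα t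
    have : (t * aRatio α) * log2 (ccf x z α)
        = t * renyi α (pvec x) - t * renyi α (pvec z) + (t * aRatio α) * log2 lam := by
      rw [hlamdef]; linarith [hmeq]
    rw [this]
    have hbx := renyi_bounds (pvec_prob hx) α
    have hbz := renyi_bounds (pvec_prob hz) α
    have h1 : |t * renyi α (pvec x)| ≤ |t| * log2 c := by
      rw [abs_mul, abs_of_nonneg hbx.1]
      exact mul_le_mul_of_nonneg_left hbx.2 (abs_nonneg t)
    have h2 : |t * renyi α (pvec z)| ≤ |t| * log2 c := by
      rw [abs_mul, abs_of_nonneg hbz.1]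
      exact mul_le_mul_of_nonneg_left hbz.2 (abs_nonneg t)
    have h3 : |(t * aRatio α) * log2 lam| = |t * aRatio α| * |log2 lam| := abs_mul _ _
    calc |t * renyi α (pvec x) - t * renyi α (pvec z) + (t * aRatio α) * log2 lam|
        ≤ |t * renyi α (pvec x)| + |t * renyi α (pvec z)| + |(t * aRatio α) * log2 lam| := by
          exact (abs_add_le _ _).trans (add_le_add_left (abs_sub _ _) _)
      _ ≤ 2 * |t| * log2 c + |t * aRatio α| * |log2 lam| := by
          rw [h3]; linarith [h1, h2]

lemma integrable_w_ccf {τ : MeasureTheory.Measure ℝ≥0∞}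
    [MeasureTheory.IsProbabilityMeasure τ] {t : ℝ}
    (hwint : MeasureTheory.Integrable (fun α => t * aRatio α) τ)
    {x z : Fin d → ℝ} (hx : x ∈ coneSet d) (hz : z ∈ coneSet d)
    (hxz : ∀ i, x i ≤ z i) :
    MeasureTheory.Integrable (fun α => (t * aRatio α) * ccf x z α) τ := by
  refine MeasureTheory.Integrable.mono' hwint.abs
    (((measurable_aRatio.const_mul t).mul (measurable_ccf hx hz)).aestronglyMeasurable)
    (Filter.Eventually.of_forall fun α => ?_)
  obtain ⟨hpos, hle⟩ := ccf_pos_le_one hx hz hxz α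
  rw [Real.norm_eq_abs, abs_mul]
  calc |t * aRatio α| * |ccf x z α| ≤ |t * aRatio α| * 1 := by
        refine mul_le_mul_of_nonneg_left ?_ (abs_nonneg _)
        rw [abs_of_pos hpos]; exact hle
    _ = |t * aRatio α| := mul_one _

/-- Step 1, concave case: integral master inequality. -/
lemma step1 {τ : MeasureTheory.Measure ℝ≥0∞} [MeasureTheory.IsProbabilityMeasure τ]
    {t : ℝ} (hae1 : ∀ᵐ α ∂τ, α ≠ 1)
    (hwint : MeasureTheory.Integrable (fun α => t * aRatio α) τ)
    {x z : Fin d → ℝ} (hx : x ∈ coneSet d) (hz : z ∈ coneSet d)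
    (hxz : ∀ i, x i ≤ z i) :
    (0 < t → t * ∫ α, renyi α (pvec x) ∂τ
      ≤ (∫ α, (t * aRatio α) * log2 (ccf x z α) ∂τ)
        - (∫ α, t * aRatio α ∂τ) * log2 ((∑ i, x i) / (∑ i, z i))
        + t * ∫ α, renyi α (pvec z) ∂τ) ∧
    (t < 0 → (∫ α, (t * aRatio α) * log2 (ccf x z α) ∂τ)
        - (∫ α, t * aRatio α ∂τ) * log2 ((∑ i, x i) / (∑ i, z i))
        + t * ∫ α, renyi α (pvec z) ∂τ ≤ t * ∫ α, renyi α (pvec x) ∂τ) := by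
  set lam : ℝ := (∑ i, x i) / (∑ i, z i) with hlamdef
  have iA := integrable_w_log_ccf hwint hae1 hx hz hxz
  have iB := hwint.mul_const (log2 lam)
  have iC := (integrable_renyi (pvec_prob hz) τ).const_mul t
  have iX := (integrable_renyi (pvec_prob hx) τ).const_mul t
  have iAB : MeasureTheory.Integrable
      (fun α => (t * aRatio α) * log2 (ccf x z α) - (t * aRatio α) * log2 lam) τ :=
    iA.sub iB
  have iRHS : MeasureTheory.Integrable
      (fun α => (t * aRatio α) * log2 (ccf x z α) - (t * aRatio α) * log2 lam
        + t * renyi α (pvec z)) τ := iAB.add iC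
  have hR : ∫ α, ((t * aRatio α) * log2 (ccf x z α) - (t * aRatio α) * log2 lam
        + t * renyi α (pvec z)) ∂τ
      = (∫ α, (t * aRatio α) * log2 (ccf x z α) ∂τ)
        - (∫ α, t * aRatio α ∂τ) * log2 lam + t * ∫ α, renyi α (pvec z) ∂τ := by
    rw [MeasureTheory.integral_add iAB iC, MeasureTheory.integral_sub iA iB,
      MeasureTheory.integral_const_mul, MeasureTheory.integral_mul_const]
  have hL : ∫ α, t * renyi α (pvec x) ∂τ = t * ∫ α, renyi α (pvec x) ∂τ :=
    MeasureTheory.integral_const_mul t _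
  constructor
  · intro htpos
    rw [← hR, ← hL]
    refine MeasureTheory.integral_mono_ae iX iRHS ?_
    filter_upwards [hae1] with α hα
    by_cases h0 : α = 0
    · subst h0
      rw [aRatio_zero, mul_zero, zero_mul, zero_mul, sub_zero, zero_add]
      exact mul_le_mul_of_nonneg_left (renyi_zero_pvec_mono hx hz hxz) htpos.le
    · have := master_eq hx hz h0 hα t
      rw [hlamdef]; linarith [this]
  · intro htneg
    rw [← hR, ← hL]
    refine MeasureTheory.integral_mono_ae iRHS iX ?_
    filter_upwards [hae1] with α hα
    by_cases h0 : α = 0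
    · subst h0
      rw [aRatio_zero, mul_zero, zero_mul, zero_mul, sub_zero, zero_add]
      exact mul_le_mul_of_nonpos_left (renyi_zero_pvec_mono hx hz hxz) htneg.le
    · have := master_eq hx hz h0 hα t
      rw [hlamdef]; linarith [this]

end S13
namespace S13

open MeasureTheory

variable {d : ℕ}

lemma lam_add_eq {x y : Fin d → ℝ} (hx : x ∈ coneSet d) (hy : y ∈ coneSet d) :
    (∑ i, x i) / (∑ i, (x + y) i) + (∑ i, y i) / (∑ i, (x + y) i) = 1 := by
  have hSz := cone_sum_pos (cone_add hx hy)
  rw [← add_div, sum_add_eq, div_self (by rw [sum_add_eq] at hSz; exact hSz.ne')]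

lemma le_add_left' {x y : Fin d → ℝ} (hy : y ∈ coneSet d) : ∀ i, x i ≤ (x + y) i :=
  fun i => le_add_of_nonneg_right (hy.1 i)

lemma le_add_right' {x y : Fin d → ℝ} (hx : x ∈ coneSet d) : ∀ i, y i ≤ (x + y) i :=
  fun i => le_add_of_nonneg_left (hx.1 i)

/-- Superadditivity in the concave case. -/
lemma superadd_concave {τ : Measure ℝ≥0∞} [IsProbabilityMeasure τ] {t : ℝ} (ht : 0 < t)
    (h1null : τ {1} = 0) (hgt1 : τ {α | 1 < α} = 0)
    (hwint0 : Integrable aRatio τ) (hs1 : t * ∫ α, aRatio α ∂τ ≤ 1)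
    {x y : Fin d → ℝ} (hx : x ∈ coneSet d) (hy : y ∈ coneSet d) :
    (∑ i, x i) * exp2 (t * ∫ α, renyi α (pvec x) ∂τ)
      + (∑ i, y i) * exp2 (t * ∫ α, renyi α (pvec y) ∂τ)
      ≤ (∑ i, (x + y) i) * exp2 (t * ∫ α, renyi α (pvec (x + y)) ∂τ) := by
  have hz := cone_add hx hy
  have haelt : ∀ᵐ α ∂τ, α < 1 := ae_lt_one h1null hgt1
  have hae1 : ∀ᵐ α ∂τ, α ≠ 1 := haelt.mono fun α h => h.ne
  have hwint : Integrable (fun α => t * aRatio α) τ := hwint0.const_mul t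
  have hw0 : 0 ≤ᵐ[τ] fun α => t * aRatio α := by
    filter_upwards [haelt] with α h
    exact mul_nonneg ht.le (aRatio_nonneg_of_lt_one h)
  have hseq : ∫ α, t * aRatio α ∂τ = t * ∫ α, aRatio α ∂τ := integral_const_mul t _
  set s : ℝ := ∫ α, t * aRatio α ∂τ with hsdef
  have hsle : s ≤ 1 := by rw [hseq]; exact hs1
  have hs0 : 0 ≤ s := integral_nonneg_of_ae hw0
  have hSz := cone_sum_pos hz
  have hxz := le_add_left' (x := x) hy
  have hyz := le_add_right' (y := y) hx
  set E : ℝ := exp2 (t * ∫ α, renyi α (pvec (x + y)) ∂τ) with hEdef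
  have key : ∀ v : Fin d → ℝ, v ∈ coneSet d → (∀ i, v i ≤ (x + y) i) →
      (∑ i, v i) * exp2 (t * ∫ α, renyi α (pvec v) ∂τ)
        ≤ ((1 - s) * ((∑ i, v i) / (∑ i, (x + y) i))
            + ∫ α, (t * aRatio α) * ccf v (x + y) α ∂τ) * ((∑ i, (x + y) i) * E) := by
    intro v hv hvz
    have hSv := cone_sum_pos hv
    set lam : ℝ := (∑ i, v i) / (∑ i, (x + y) i) with hlamdef
    have hlam : 0 < lam := div_pos hSv hSz
    have h1 := (step1 hae1 hwint hv hz hvz).1 ht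
    have hA := amgm_forward (μ := τ) (w := fun α => t * aRatio α) (c := ccf v (x + y))
      (W := 1 - s) (lam := lam) (by linarith) hlam hwint hw0
      (Filter.Eventually.of_forall fun α => (ccf_pos_le_one hv hz hvz α).1)
      (integrable_w_ccf hwint hv hz hvz)
      (integrable_w_log_ccf hwint hae1 hv hz hvz)
      (by rw [← hsdef]; ring)
    have hchain : (∑ i, v i) * exp2 (t * ∫ α, renyi α (pvec v) ∂τ)
        = (∑ i, (x + y) i) * exp2 (log2 lam + t * ∫ α, renyi α (pvec v) ∂τ) := by
      rw [exp2_add, exp2_log2 hlam, hlamdef]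
      have hSz2 : (∑ j, (x j + y j) : ℝ) ≠ 0 := by
        have h' := hSz
        simp only [Pi.add_apply] at h'
        exact h'.ne'
      field_simp
    rw [hchain]
    have hexp : exp2 (log2 lam + t * ∫ α, renyi α (pvec v) ∂τ)
        ≤ ((1 - s) * lam + ∫ α, (t * aRatio α) * ccf v (x + y) α ∂τ) * E := by
      calc exp2 (log2 lam + t * ∫ α, renyi α (pvec v) ∂τ)
          ≤ exp2 (((1 - s) * log2 lam
              + ∫ α, (t * aRatio α) * log2 (ccf v (x + y) α) ∂τ)
              + t * ∫ α, renyi α (pvec (x + y)) ∂τ) := by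
            refine exp2_mono ?_
            rw [← hlamdef] at h1
            rw [hsdef]
            linarith [h1]
        _ = exp2 ((1 - s) * log2 lam
              + ∫ α, (t * aRatio α) * log2 (ccf v (x + y) α) ∂τ) * E := by
            rw [exp2_add, hEdef]
        _ ≤ ((1 - s) * lam + ∫ α, (t * aRatio α) * ccf v (x + y) α ∂τ) * E := by
            refine mul_le_mul_of_nonneg_right hA ?_
            rw [hEdef]; exact (exp2_pos _).le
    calc (∑ i, (x + y) i) * exp2 (log2 lam + t * ∫ α, renyi α (pvec v) ∂τ)
        ≤ (∑ i, (x + y) i) * (((1 - s) * lam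
            + ∫ α, (t * aRatio α) * ccf v (x + y) α ∂τ) * E) :=
          mul_le_mul_of_nonneg_left hexp hSz.le
      _ = ((1 - s) * lam + ∫ α, (t * aRatio α) * ccf v (x + y) α ∂τ)
          * ((∑ i, (x + y) i) * E) := by ring
  have kx := key x hx hxz
  have ky := key y hy hyz
  have hccsum : (∫ α, (t * aRatio α) * ccf x (x + y) α ∂τ)
      + (∫ α, (t * aRatio α) * ccf y (x + y) α ∂τ) ≤ s := by
    rw [← integral_add (integrable_w_ccf hwint hx hz hxz) (integrable_w_ccf hwint hy hz hyz)]
    rw [hsdef]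
    refine integral_mono_ae
      ((integrable_w_ccf hwint hx hz hxz).add (integrable_w_ccf hwint hy hz hyz)) hwint ?_
    filter_upwards [haelt] with α hα
    have hw : 0 ≤ t * aRatio α := mul_nonneg ht.le (aRatio_nonneg_of_lt_one hα)
    have htop : α ≠ ⊤ := (hα.trans ENNReal.one_lt_top).ne
    by_cases h0 : α = 0
    · subst h0
      rw [ccf_zero, ccf_zero, ← mul_add, lam_add_eq hx hy, mul_one]
    · have ha0 : 0 < α.toReal := ENNReal.toReal_pos h0 htop
      have ha1 : α.toReal < 1 := toReal_lt_one hα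
      rw [ccf_of_ne h0 htop, ccf_of_ne h0 htop, ← mul_add, ← add_div]
      have hmink := rev_minkowski hx hy ha0 ha1
      have hle1 : (Mnorm α.toReal x + Mnorm α.toReal y) / Mnorm α.toReal (x + y) ≤ 1 :=
        (div_le_one (Mnorm_pos hz ha0)).2 hmink
      calc (t * aRatio α) * ((Mnorm α.toReal x + Mnorm α.toReal y) / Mnorm α.toReal (x + y))
          ≤ (t * aRatio α) * 1 := mul_le_mul_of_nonneg_left hle1 hw
        _ = t * aRatio α := mul_one _
  have hsum_le : ((1 - s) * ((∑ i, x i) / (∑ i, (x + y) i))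
        + ∫ α, (t * aRatio α) * ccf x (x + y) α ∂τ)
      + ((1 - s) * ((∑ i, y i) / (∑ i, (x + y) i))
        + ∫ α, (t * aRatio α) * ccf y (x + y) α ∂τ) ≤ 1 := by
    have := lam_add_eq hx hy
    nlinarith [hccsum, this, hsle]
  have hEpos : 0 ≤ (∑ i, (x + y) i) * E := by
    rw [hEdef]
    exact mul_nonneg hSz.le (exp2_pos _).le
  calc (∑ i, x i) * exp2 (t * ∫ α, renyi α (pvec x) ∂τ)
      + (∑ i, y i) * exp2 (t * ∫ α, renyi α (pvec y) ∂τ)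
      ≤ (((1 - s) * ((∑ i, x i) / (∑ i, (x + y) i))
          + ∫ α, (t * aRatio α) * ccf x (x + y) α ∂τ)
        + ((1 - s) * ((∑ i, y i) / (∑ i, (x + y) i))
          + ∫ α, (t * aRatio α) * ccf y (x + y) α ∂τ)) * ((∑ i, (x + y) i) * E) := by
        rw [add_mul]
        exact add_le_add kx ky
    _ ≤ 1 * ((∑ i, (x + y) i) * E) := mul_le_mul_of_nonneg_right hsum_le hEpos
    _ = (∑ i, (x + y) i) * exp2 (t * ∫ α, renyi α (pvec (x + y)) ∂τ) := by
        rw [one_mul, hEdef]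

end S13
namespace S13

open MeasureTheory

variable {d : ℕ}

lemma aRatio_nonpos_of_gt_one {α : ℝ≥0∞} (h : 1 < α) : aRatio α ≤ 0 := by
  by_cases htop : α = ⊤
  · rw [aRatio, if_pos htop]; norm_num
  · have ha : 1 < α.toReal := by
      have := (ENNReal.toReal_lt_toReal ENNReal.one_ne_top htop).2 h
      simpa using this
    rw [aRatio, if_neg htop]
    exact div_nonpos_of_nonneg_of_nonpos ENNReal.toReal_nonneg (by linarith)

lemma ccf_star_ge_one {x y : Fin d → ℝ} (hx : x ∈ coneSet d) (hy : y ∈ coneSet d)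
    {αs : ℝ≥0∞} (hs : 1 < αs) :
    1 ≤ ccf x (x + y) αs + ccf y (x + y) αs := by
  have hz := cone_add hx hy
  obtain ⟨i0, hi0⟩ := cone_exists_pos hx
  have : Nonempty (Fin d) := ⟨i0⟩
  have h0 : αs ≠ 0 := (zero_lt_one.trans hs).ne'
  by_cases htop : αs = ⊤
  · subst htop
    rw [ccf_top, ccf_top, ← add_div]
    exact (one_le_div (sup_pos hz)).2 sup_subadd
  · have ha1 : 1 ≤ αs.toReal := by
      have := (ENNReal.toReal_lt_toReal ENNReal.one_ne_top htop).2 hs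
      simp at this
      linarith
    have ha0 : 0 < αs.toReal := by linarith
    rw [ccf_of_ne h0 htop, ccf_of_ne h0 htop, ← add_div]
    exact (one_le_div (Mnorm_pos hz ha0)).2 (fwd_minkowski hx.1 hy.1 ha1)

/-- Subadditivity in the convex case (b). -/
lemma subadd_caseB {τ : Measure ℝ≥0∞} [IsProbabilityMeasure τ] {t : ℝ} (ht : t < 0)
    {αstar : ℝ≥0∞} (hstar : 1 < αstar)
    (hnull : τ {α | 1 < α ∧ α ≠ αstar} = 0) (h1null : τ {1} = 0)
    (hwint0 : Integrable aRatio τ) (hs1 : (1:ℝ) ≤ t * ∫ α, aRatio α ∂τ)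
    {x y : Fin d → ℝ} (hx : x ∈ coneSet d) (hy : y ∈ coneSet d) :
    (∑ i, (x + y) i) * exp2 (t * ∫ α, renyi α (pvec (x + y)) ∂τ)
      ≤ (∑ i, x i) * exp2 (t * ∫ α, renyi α (pvec x) ∂τ)
        + (∑ i, y i) * exp2 (t * ∫ α, renyi α (pvec y) ∂τ) := by
  have hz := cone_add hx hy
  have hSz := cone_sum_pos hz
  have hxz := le_add_left' (x := x) hy
  have hyz := le_add_right' (y := y) hx
  have hms : MeasurableSet ({αstar} : Set ℝ≥0∞) := measurableSet_singleton αstar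
  have hae1 : ∀ᵐ α ∂τ, α ≠ 1 := by
    have := measure_eq_zero_iff_ae_notMem.mp h1null
    filter_upwards [this] with α h
    simpa using h
  have hbadnull : τ ({1} ∪ {α | 1 < α ∧ α ≠ αstar}) = 0 :=
    measure_union_null h1null hnull
  have haebad : ∀ᵐ α ∂τ, α ∉ ({1} ∪ {α | 1 < α ∧ α ≠ αstar}) :=
    measure_eq_zero_iff_ae_notMem.mp hbadnull
  have haelt' : ∀ᵐ α ∂(τ.restrict {αstar}ᶜ), α < 1 := by
    filter_upwards [ae_restrict_of_ae haebad, ae_restrict_mem hms.compl] with α h1 h2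
    by_contra hcon
    push_neg at hcon
    rcases eq_or_lt_of_le hcon with he | hl
    · exact h1 (Set.mem_union_left _ (by simp [← he]))
    · refine h1 (Set.mem_union_right _ ⟨hl, ?_⟩)
      simpa [Set.mem_compl_iff, Set.mem_singleton_iff] using h2
  have hwint : Integrable (fun α => t * aRatio α) τ := hwint0.const_mul t
  have hseq : ∫ α, t * aRatio α ∂τ = t * ∫ α, aRatio α ∂τ := integral_const_mul t _
  set s : ℝ := ∫ α, t * aRatio α ∂τ with hsdef
  have hsge : 1 ≤ s := by rw [hseq]; exact hs1
  set m0 : ℝ := (τ {αstar}).toReal with hm0def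
  have hm00 : 0 ≤ m0 := ENNReal.toReal_nonneg
  have hwstar : 0 ≤ t * aRatio αstar := by
    have := aRatio_nonpos_of_gt_one hstar
    nlinarith
  set q : ℝ := m0 * (t * aRatio αstar) with hqdef
  have hq0 : 0 ≤ q := mul_nonneg hm00 hwstar
  have split : ∀ g : ℝ≥0∞ → ℝ, Integrable g τ →
      ∫ α, g α ∂τ = m0 * g αstar + ∫ α in {αstar}ᶜ, g α ∂τ := by
    intro g hg
    rw [← integral_add_compl hms hg, integral_singleton]
    simp [hm0def, smul_eq_mul]
    exact Or.inl rfl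
  have hw0' : (fun α => t * aRatio α) ≤ᵐ[τ.restrict {αstar}ᶜ] 0 := by
    filter_upwards [haelt'] with α h
    have := aRatio_nonneg_of_lt_one h
    simp only [Pi.zero_apply]
    nlinarith
  have hsplitw : s = m0 * (t * aRatio αstar) + ∫ α in {αstar}ᶜ, t * aRatio α ∂τ := by
    rw [hsdef]; exact split _ hwint
  set E : ℝ := exp2 (t * ∫ α, renyi α (pvec (x + y)) ∂τ) with hEdef
  -- key estimate for each of x, y
  have key : ∀ v : Fin d → ℝ, v ∈ coneSet d → (∀ i, v i ≤ (x + y) i) →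
      ((1 - s) * ((∑ i, v i) / (∑ i, (x + y) i)) + q * ccf v (x + y) αstar
          + ∫ α in {αstar}ᶜ, (t * aRatio α) * ccf v (x + y) α ∂τ) * ((∑ i, (x + y) i) * E)
        ≤ (∑ i, v i) * exp2 (t * ∫ α, renyi α (pvec v) ∂τ) := by
    intro v hv hvz
    have hSv := cone_sum_pos hv
    set lam : ℝ := (∑ i, v i) / (∑ i, (x + y) i) with hlamdef
    have hlam : 0 < lam := div_pos hSv hSz
    have hastar : 0 < ccf v (x + y) αstar := (ccf_pos_le_one hv hz hvz αstar).1
    have h1 := (step1 hae1 hwint hv hz hvz).2 ht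
    have hsplitlog := split _ (integrable_w_log_ccf hwint hae1 hv hz hvz)
    have hB := amgm_reverse (μ := τ.restrict {αstar}ᶜ) (w := fun α => t * aRatio α)
      (c := ccf v (x + y)) (p := 1 - s) (lam := lam) (q := q)
      (astar := ccf v (x + y) αstar)
      (by linarith) hlam hastar (hwint.restrict) hw0'
      (Filter.Eventually.of_forall fun α => (ccf_pos_le_one hv hz hvz α).1)
      ((integrable_w_ccf hwint hv hz hvz).restrict)
      ((integrable_w_log_ccf hwint hae1 hv hz hvz).restrict)
      (by
        show 1 - s + q + (∫ α in {αstar}ᶜ, t * aRatio α ∂τ) = 1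
        rw [hqdef]
        linarith [hsplitw])
    have hchain : (∑ i, v i) * exp2 (t * ∫ α, renyi α (pvec v) ∂τ)
        = (∑ i, (x + y) i) * exp2 (log2 lam + t * ∫ α, renyi α (pvec v) ∂τ) := by
      rw [exp2_add, exp2_log2 hlam, hlamdef]
      have hSz2 : (∑ j, (x j + y j) : ℝ) ≠ 0 := by
        have h' := hSz
        simp only [Pi.add_apply] at h'
        exact h'.ne'
      field_simp
    rw [hchain]
    have hexp : ((1 - s) * lam + q * ccf v (x + y) αstar
          + ∫ α in {αstar}ᶜ, (t * aRatio α) * ccf v (x + y) α ∂τ) * E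
        ≤ exp2 (log2 lam + t * ∫ α, renyi α (pvec v) ∂τ) := by
      calc ((1 - s) * lam + q * ccf v (x + y) αstar
            + ∫ α in {αstar}ᶜ, (t * aRatio α) * ccf v (x + y) α ∂τ) * E
          ≤ exp2 ((1 - s) * log2 lam + q * log2 (ccf v (x + y) αstar)
              + ∫ α in {αstar}ᶜ, (t * aRatio α) * log2 (ccf v (x + y) α) ∂τ) * E := by
            refine mul_le_mul_of_nonneg_right hB ?_
            rw [hEdef]; exact (exp2_pos _).le
        _ = exp2 (((1 - s) * log2 lam + q * log2 (ccf v (x + y) αstar)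
              + ∫ α in {αstar}ᶜ, (t * aRatio α) * log2 (ccf v (x + y) α) ∂τ)
              + t * ∫ α, renyi α (pvec (x + y)) ∂τ) := by
            rw [hEdef, ← exp2_add]
        _ ≤ exp2 (log2 lam + t * ∫ α, renyi α (pvec v) ∂τ) := by
            refine exp2_mono ?_
            rw [← hlamdef] at h1
            have hq' : q * log2 (ccf v (x + y) αstar)
                = m0 * ((t * aRatio αstar) * log2 (ccf v (x + y) αstar)) := by
              rw [hqdef]; ring
            rw [hq', hsdef]
            linarith [h1, hsplitlog]
    calc ((1 - s) * lam + q * ccf v (x + y) αstar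
          + ∫ α in {αstar}ᶜ, (t * aRatio α) * ccf v (x + y) α ∂τ) * ((∑ i, (x + y) i) * E)
        = (∑ i, (x + y) i) * (((1 - s) * lam + q * ccf v (x + y) αstar
          + ∫ α in {αstar}ᶜ, (t * aRatio α) * ccf v (x + y) α ∂τ) * E) := by ring
      _ ≤ (∑ i, (x + y) i) * exp2 (log2 lam + t * ∫ α, renyi α (pvec v) ∂τ) :=
          mul_le_mul_of_nonneg_left hexp hSz.le
  have kx := key x hx hxz
  have ky := key y hy hyz
  have hccsum : ∫ α in {αstar}ᶜ, (t * aRatio α) * 1 ∂τ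
      ≤ (∫ α in {αstar}ᶜ, (t * aRatio α) * ccf x (x + y) α ∂τ)
        + ∫ α in {αstar}ᶜ, (t * aRatio α) * ccf y (x + y) α ∂τ := by
    rw [← integral_add ((integrable_w_ccf hwint hx hz hxz).restrict)
      ((integrable_w_ccf hwint hy hz hyz).restrict)]
    refine integral_mono_ae (by
        refine Integrable.congr ((hwint.restrict (s := {αstar}ᶜ))) ?_
        exact Filter.Eventually.of_forall fun α => (mul_one _).symm)
      (((integrable_w_ccf hwint hx hz hxz).restrict).add
        ((integrable_w_ccf hwint hy hz hyz).restrict)) ?_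
    filter_upwards [haelt'] with α hα
    have hw : t * aRatio α ≤ 0 := by
      have := aRatio_nonneg_of_lt_one hα
      nlinarith
    have htop : α ≠ ⊤ := (hα.trans ENNReal.one_lt_top).ne
    by_cases h0 : α = 0
    · subst h0
      rw [ccf_zero, ccf_zero, ← mul_add, lam_add_eq hx hy]
    · have ha0 : 0 < α.toReal := ENNReal.toReal_pos h0 htop
      have ha1 : α.toReal < 1 := toReal_lt_one hα
      rw [ccf_of_ne h0 htop, ccf_of_ne h0 htop, ← mul_add, ← add_div]
      have hle1 : (Mnorm α.toReal x + Mnorm α.toReal y) / Mnorm α.toReal (x + y) ≤ 1 :=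
        (div_le_one (Mnorm_pos hz ha0)).2 (rev_minkowski hx hy ha0 ha1)
      exact mul_le_mul_of_nonpos_left hle1 hw
  have hwone : ∫ α in {αstar}ᶜ, (t * aRatio α) * 1 ∂τ
      = ∫ α in {αstar}ᶜ, t * aRatio α ∂τ := by
    refine integral_congr_ae (Filter.Eventually.of_forall fun α => mul_one _)
  have hstarsum := ccf_star_ge_one hx hy hstar
  have hlamsum := lam_add_eq hx hy
  have hq' : q * 1 ≤ q * (ccf x (x + y) αstar + ccf y (x + y) αstar) :=
    mul_le_mul_of_nonneg_left hstarsum hq0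
  have h1s : (1 - s) * ((∑ i, x i) / (∑ i, (x + y) i))
      + (1 - s) * ((∑ i, y i) / (∑ i, (x + y) i)) = 1 - s := by
    rw [← mul_add, hlamsum, mul_one]
  have hBsum : 1 ≤ ((1 - s) * ((∑ i, x i) / (∑ i, (x + y) i)) + q * ccf x (x + y) αstar
      + ∫ α in {αstar}ᶜ, (t * aRatio α) * ccf x (x + y) α ∂τ)
      + ((1 - s) * ((∑ i, y i) / (∑ i, (x + y) i)) + q * ccf y (x + y) αstar
      + ∫ α in {αstar}ᶜ, (t * aRatio α) * ccf y (x + y) α ∂τ) := by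
    rw [hwone] at hccsum
    rw [hqdef] at hq' ⊢
    nlinarith [hsplitw, hccsum, hq', h1s]
  have hEpos : 0 ≤ (∑ i, (x + y) i) * E := mul_nonneg hSz.le (exp2_pos _).le
  calc (∑ i, (x + y) i) * exp2 (t * ∫ α, renyi α (pvec (x + y)) ∂τ)
      = 1 * ((∑ i, (x + y) i) * E) := by rw [one_mul, hEdef]
    _ ≤ (((1 - s) * ((∑ i, x i) / (∑ i, (x + y) i)) + q * ccf x (x + y) αstar
          + ∫ α in {αstar}ᶜ, (t * aRatio α) * ccf x (x + y) α ∂τ)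
        + ((1 - s) * ((∑ i, y i) / (∑ i, (x + y) i)) + q * ccf y (x + y) αstar
          + ∫ α in {αstar}ᶜ, (t * aRatio α) * ccf y (x + y) α ∂τ))
        * ((∑ i, (x + y) i) * E) := mul_le_mul_of_nonneg_right hBsum hEpos
    _ ≤ (∑ i, x i) * exp2 (t * ∫ α, renyi α (pvec x) ∂τ)
        + (∑ i, y i) * exp2 (t * ∫ α, renyi α (pvec y) ∂τ) := by
        rw [add_mul]
        exact add_le_add kx ky

end S13
namespace S13

open MeasureTheory

variable {d : ℕ}

lemma cone_smul {x : Fin d → ℝ} (hx : x ∈ coneSet d) {c : ℝ} (hc : 0 < c) :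
    c • x ∈ coneSet d := by
  refine ⟨fun i => by
    simp only [Pi.smul_apply, smul_eq_mul]
    exact mul_nonneg hc.le (hx.1 i), fun h => ?_⟩
  obtain ⟨i, hi⟩ := cone_exists_pos hx
  have := congrFun h i
  simp only [Pi.smul_apply, smul_eq_mul, Pi.zero_apply] at this
  nlinarith

lemma coneSet_convex : Convex ℝ (coneSet d) := by
  intro x hx y hy a b ha hb hab
  constructor
  · intro i
    simp only [Pi.add_apply, Pi.smul_apply, smul_eq_mul]
    exact add_nonneg (mul_nonneg ha (hx.1 i)) (mul_nonneg hb (hy.1 i))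
  · intro h
    rcases eq_or_lt_of_le ha with ha0 | ha0
    · obtain ⟨i, hi⟩ := cone_exists_pos hy
      have hb1 : b = 1 := by linarith
      have := congrFun h i
      simp only [Pi.add_apply, Pi.smul_apply, smul_eq_mul, Pi.zero_apply] at this
      rw [← ha0, hb1] at this
      nlinarith
    · obtain ⟨i, hi⟩ := cone_exists_pos hx
      have := congrFun h i
      simp only [Pi.add_apply, Pi.smul_apply, smul_eq_mul, Pi.zero_apply] at this
      nlinarith [mul_nonneg hb (hy.1 i)]

lemma concaveOn_of_superadd {f : (Fin d → ℝ) → ℝ}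
    (hhom : ∀ x, x ∈ coneSet d → ∀ c : ℝ, 0 < c → f (c • x) = c * f x)
    (hsuper : ∀ x y, x ∈ coneSet d → y ∈ coneSet d → f x + f y ≤ f (x + y)) :
    ConcaveOn ℝ (coneSet d) f := by
  refine ⟨coneSet_convex, fun x hx y hy a b ha hb hab => ?_⟩
  rcases eq_or_lt_of_le ha with ha0 | ha0
  · have hb1 : b = 1 := by linarith
    rw [← ha0, hb1]
    simp
  rcases eq_or_lt_of_le hb with hb0 | hb0
  · have ha1 : a = 1 := by linarith
    rw [← hb0, ha1]
    simp
  calc a • f x + b • f y = f (a • x) + f (b • y) := by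
        rw [hhom x hx a ha0, hhom y hy b hb0, smul_eq_mul, smul_eq_mul]
    _ ≤ f (a • x + b • y) := hsuper _ _ (cone_smul hx ha0) (cone_smul hy hb0)

lemma convexOn_of_subadd {f : (Fin d → ℝ) → ℝ}
    (hhom : ∀ x, x ∈ coneSet d → ∀ c : ℝ, 0 < c → f (c • x) = c * f x)
    (hsub : ∀ x y, x ∈ coneSet d → y ∈ coneSet d → f (x + y) ≤ f x + f y) :
    ConvexOn ℝ (coneSet d) f := by
  refine ⟨coneSet_convex, fun x hx y hy a b ha hb hab => ?_⟩
  rcases eq_or_lt_of_le ha with ha0 | ha0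
  · have hb1 : b = 1 := by linarith
    rw [← ha0, hb1]
    simp
  rcases eq_or_lt_of_le hb with hb0 | hb0
  · have ha1 : a = 1 := by linarith
    rw [← hb0, ha1]
    simp
  calc f (a • x + b • y) ≤ f (a • x) + f (b • y) :=
        hsub _ _ (cone_smul hx ha0) (cone_smul hy hb0)
    _ = a • f x + b • f y := by
        rw [hhom x hx a ha0, hhom y hy b hb0, smul_eq_mul, smul_eq_mul]

lemma fhom (τ : Measure ℝ≥0∞) (t : ℝ) {x : Fin d → ℝ} (hx : x ∈ coneSet d)
    {c : ℝ} (hc : 0 < c) :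
    (∑ i, (c • x) i) * exp2 (t * ∫ α, renyi α (pvec (c • x)) ∂τ)
      = c * ((∑ i, x i) * exp2 (t * ∫ α, renyi α (pvec x) ∂τ)) := by
  have hpv : pvec (c • x) = pvec x := by
    funext i
    simp only [pvec, Pi.smul_apply, smul_eq_mul, ← Finset.mul_sum]
    rw [mul_div_mul_left _ _ hc.ne']
  rw [hpv]
  simp only [Pi.smul_apply, smul_eq_mul, ← Finset.mul_sum]
  ring

end S13


/-- Concavity/convexity for general probability measures: sufficient
conditions on `t` and the Borel probability measure `τ` on `[0,∞]` under which
`x ↦ ‖x‖₁ · 2^(t·∫ H_α(x/‖x‖₁) dτ(α))` is concave, respectively convex, on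
`(ℝ≥0)^d ∖ {0}`.  (Here `supp(τ) ⊆ [0,1]` is expressed as `τ((1,∞]) = 0`.) -/
theorem measure_concavity_convexity (τ : Measure ℝ≥0∞) (hτ : IsProbabilityMeasure τ)
    (t : ℝ) (ht : t ≠ 0) (d : ℕ) :
    ((0 < t ∧ τ {α | 1 < α} = 0 ∧ τ {1} = 0 ∧
        IntegrableOn aRatio (Set.Iio 1) τ ∧
        ∫ α in Set.Iio (1 : ℝ≥0∞), aRatio α ∂τ ≤ 1 / t) →
      ConcaveOn ℝ {x : Fin d → ℝ | (∀ i, 0 ≤ x i) ∧ x ≠ 0}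
        (fun x => (∑ i, x i) *
          exp2 (t * ∫ α, renyi α (fun i => x i / ∑ j, x j) ∂τ))) ∧
    ((t < 0 ∧ (τ {α | 1 < α} = 0 ∨
        (∃ αstar : ℝ≥0∞, 1 < αstar ∧ τ {α | 1 < α ∧ α ≠ αstar} = 0 ∧ τ {1} = 0 ∧
          Integrable aRatio τ ∧ ∫ α, aRatio α ∂τ ≤ 1 / t))) →
      ConvexOn ℝ {x : Fin d → ℝ | (∀ i, 0 ≤ x i) ∧ x ≠ 0}
        (fun x => (∑ i, x i) *
          exp2 (t * ∫ α, renyi α (fun i => x i / ∑ j, x j) ∂τ))) := by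
  haveI := hτ
  constructor
  · rintro ⟨htpos, hgt1, h1null, hIntOn, hIntLe⟩
    have haelt := S13.ae_lt_one h1null hgt1
    have hres : τ.restrict (Set.Iio 1) = τ :=
      Measure.restrict_eq_self_of_ae_mem (haelt.mono fun α h => h)
    have hwint0 : Integrable aRatio τ := by
      have h := hIntOn
      rwa [IntegrableOn, hres] at h
    have hle : ∫ α, aRatio α ∂τ ≤ 1 / t := by
      have h := hIntLe
      rwa [hres] at h
    have hs1 : t * ∫ α, aRatio α ∂τ ≤ 1 := by
      have h2 := mul_le_mul_of_nonneg_left hle htpos.le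
      rwa [mul_one_div, div_self htpos.ne'] at h2
    exact S13.concaveOn_of_superadd
      (fun x hx c hc => S13.fhom τ t hx hc)
      (fun x y hx hy => S13.superadd_concave htpos h1null hgt1 hwint0 hs1 hx hy)
  · rintro ⟨htneg, hcase⟩
    rcases hcase with hnull | ⟨αstar, hstar, hnull2, h1null, hint, hbound⟩
    · exact S13.convexOn_of_subadd
        (fun x hx c hc => S13.fhom τ t hx hc)
        (fun x y hx hy => S13.subadd_caseA htneg hnull hx hy)
    · have hs1 : (1:ℝ) ≤ t * ∫ α, aRatio α ∂τ := by
        have h2 := mul_le_mul_of_nonpos_left hbound htneg.le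
        rwa [mul_one_div, div_self (ne_of_lt htneg)] at h2
      exact S13.convexOn_of_subadd
        (fun x hx c hc => S13.fhom τ t hx hc)
        (fun x y hx hy => S13.subadd_caseB htneg hstar hnull2 h1null hint hs1 hx hy)
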